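/- arXiv:1506.05734 — 2 statements merged into one kernel-verified Lean document; each statement's English description precedes it below -/
import Mathlib

section
/- Suppose γ_s ≤ 1/6 for all s. Fix s ≥ 0 and set c = 4γ_{s+1}²/(1 − 2γ_{s+1})² and C = 2/(1 + √(1 − 4c)). Then for every integer k ≥ 0: (a) if n = 2^s(2k+1), then (1/2)||Q_{2^s}||² ≤ C^{−1}||Q_{2^s}||² ≤ a_n² a_{n−1}² ⋯ a_{n−2^s+1}² ≤ ||Q_{2^s}||²; (b) if n = 2^s(2k+2), then a_n² a_{n−1}² ⋯ a_{n−2^s+1}² ≤ C·||Q_{2^{s+1}}||²/||Q_{2^s}||² ≤ 2·||Q_{2^{s+1}}||²/||Q_{2^s}||². -/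
open Polynomial MeasureTheory Filter

/-- `r γ s` : the recursively defined scales `r 0 = 1`, `r (s+1) = γ (s+1) * (r s)²`. -/
noncomputable def r (γ : ℕ → ℝ) : ℕ → ℝ
  | 0 => 1
  | s + 1 => γ (s + 1) * (r γ s) ^ 2

/-- `P γ s` : the polynomial `P_{2^s}`, with `P_1 = X - 1` and
`P_{2^{s+1}} = P_{2^s} · (P_{2^s} + r_s)`. -/
noncomputable def P (γ : ℕ → ℝ) : ℕ → Polynomial ℝ
  | 0 => X - 1
  | s + 1 => P γ s * (P γ s + C (r γ s))

/-- The integral `∫ f dν_s` of a function `f` against the normalized counting measure `ν_s`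
on the `2^s` (simple, real) zeros of `P_{2^s} + r_s/2`. -/
noncomputable def nuInt (γ : ℕ → ℝ) (s : ℕ) (f : ℝ → ℝ) : ℝ :=
  (((P γ s + C (r γ s / 2)).roots.map f).sum) / 2 ^ s

/-- The Jacobi parameters `a_n = ‖Q_n‖ / ‖Q_{n-1}‖` (`n ≥ 1`), where
`‖f‖ = (∫ f² dμ)^{1/2}`, together with the convention `a_0 = 0`. -/
noncomputable def jacobiA (μ : MeasureTheory.Measure ℝ) (Q : ℕ → Polynomial ℝ) : ℕ → ℝ
  | 0 => 0
  | n + 1 => Real.sqrt (∫ x, ((Q (n + 1)).eval x) ^ 2 ∂μ) /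
      Real.sqrt (∫ x, ((Q n).eval x) ^ 2 ∂μ)

section AG

variable (γ : ℕ → ℝ)

def Hγ (γ : ℕ → ℝ) : Prop := ∀ s : ℕ, 0 < γ (s + 1) ∧ γ (s + 1) < 1 / 4

noncomputable def Gp (t : ℕ) : Polynomial ℝ := P γ t + C (r γ t / 2)

noncomputable def dd (t : ℕ) : ℝ := r γ (t + 1) / 2 - (r γ t) ^ 2 / 4

lemma r_pos (hγ : Hγ γ) : ∀ t, 0 < r γ t
  | 0 => by norm_num [r]
  | (t+1) => by
      have h1 := r_pos hγ t
      have h2 := (hγ t).1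
      have : 0 < γ (t+1) * (r γ t)^2 := by positivity
      simpa [r] using this

lemma r_succ (t : ℕ) : r γ (t+1) = γ (t+1) * (r γ t)^2 := rfl

lemma dd_neg (hγ : Hγ γ) (t : ℕ) : dd γ t < 0 := by
  have h1 := (hγ t).1
  have h2 := (hγ t).2
  have hr := r_pos γ hγ t
  have : r γ (t+1) / 2 < (r γ t)^2 / 4 := by
    rw [r_succ]
    nlinarith [sq_nonneg (r γ t)]
  simp only [dd]; linarith

lemma neg_dd_eq (t : ℕ) : -dd γ t = (r γ t)^2 * (1 - 2 * γ (t+1)) / 4 := by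
  simp only [dd, r_succ]; ring

lemma neg_dd_pos (hγ : Hγ γ) (t : ℕ) : 0 < -dd γ t := by
  have := dd_neg γ hγ t; linarith

lemma Gp_succ (t : ℕ) : Gp γ (t+1) = (Gp γ t)^2 + C (dd γ t) := by
  simp only [Gp, P, dd]
  have h1 : (C (r γ t / 2) : Polynomial ℝ) * C (r γ t / 2) = C ((r γ t)^2/4) := by
    rw [← C_mul]; ring_nf
  have h2 : (C (r γ t) : Polynomial ℝ) = C (r γ t / 2) + C (r γ t / 2) := by
    rw [← C_add]; ring_nf
  have h3 : (C (r γ (t+1) / 2 - (r γ t)^2/4) : Polynomial ℝ)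
      = C (r γ (t+1)/2) - C ((r γ t)^2/4) := by rw [C_sub]
  linear_combination (P γ t) * h2 - h1 - h3

lemma P_monic : ∀ t, (P γ t).Monic ∧ (P γ t).natDegree = 2^t
  | 0 => by
      constructor
      · simpa [P] using monic_X_sub_C (1:ℝ)
      · simpa [P] using natDegree_X_sub_C (1:ℝ)
  | (t+1) => by
      obtain ⟨hm, hd⟩ := P_monic t
      have hpos : (0 : WithBot ℕ) < (P γ t).degree := by
        rw [degree_eq_natDegree hm.ne_zero, hd]
        exact_mod_cast pow_pos (by norm_num) t
      have hm2 : (P γ t + C (r γ t)).Monic :=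
        hm.add_of_left (lt_of_le_of_lt degree_C_le hpos)
      have hd2 : (P γ t + C (r γ t)).natDegree = 2^t := by
        rw [natDegree_add_C, hd]
      constructor
      · exact hm.mul hm2
      · show (P γ t * (P γ t + C (r γ t))).natDegree = 2^(t+1)
        rw [hm.natDegree_mul hm2, hd, hd2]
        ring

lemma Gp_monic (t : ℕ) : (Gp γ t).Monic := by
  obtain ⟨hm, hd⟩ := P_monic γ t
  have hpos : (0 : WithBot ℕ) < (P γ t).degree := by
    rw [degree_eq_natDegree hm.ne_zero, hd]
    exact_mod_cast pow_pos (by norm_num) t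
  exact hm.add_of_left (lt_of_le_of_lt degree_C_le hpos)

lemma Gp_natDegree (t : ℕ) : (Gp γ t).natDegree = 2^t := by
  obtain ⟨hm, hd⟩ := P_monic γ t
  have hpos : (0 : WithBot ℕ) < (P γ t).degree := by
    rw [degree_eq_natDegree hm.ne_zero, hd]
    exact_mod_cast pow_pos (by norm_num) t
  rw [Gp, natDegree_add_C, hd]

lemma Gp_natDegree_pos (t : ℕ) : 0 < (Gp γ t).natDegree := by
  rw [Gp_natDegree]; exact pow_pos (by norm_num) t

lemma Gp_degree_pos (t : ℕ) : (0:WithBot ℕ) < (Gp γ t).degree := by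
  rw [degree_eq_natDegree (Gp_monic γ t).ne_zero, Gp_natDegree]
  exact_mod_cast pow_pos (by norm_num) t

lemma Gp_sub_monic (t : ℕ) (w : ℝ) : (Gp γ t - C w).Monic := by
  rw [sub_eq_add_neg, ← C_neg]
  exact (Gp_monic γ t).add_of_left (lt_of_le_of_lt degree_C_le (Gp_degree_pos γ t))

lemma Gp_sub_natDegree (t : ℕ) (w : ℝ) : (Gp γ t - C w).natDegree = 2^t := by
  rw [natDegree_sub_C, Gp_natDegree]

noncomputable def SAt (t : ℕ) (w : ℝ) (f : Polynomial ℝ) : ℝ :=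
  ((Gp γ t - C w).roots.map (fun x => f.eval x)).sum

noncomputable def alQ (t : ℕ) (w : ℝ) : ℝ := Real.sqrt (w - dd γ t)

lemma alpha_facts (hγ : Hγ γ) {t : ℕ} {w : ℝ} (hw : |w| ≤ r γ (t+1)/2) :
    (alQ γ t w)^2 = w - dd γ t ∧ alQ γ t w ≤ r γ t/2 ∧ 0 ≤ alQ γ t w := by
  obtain ⟨hw1, hw2⟩ := abs_le.mp hw
  have hr := r_pos γ hγ t
  have hr1 := r_pos γ hγ (t+1)
  have h1 := (hγ t).1
  have h2 := (hγ t).2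
  have hnn : 0 ≤ w - dd γ t := by
    simp only [dd]
    have : r γ (t+1) < (r γ t)^2/4 := by
      rw [r_succ]; nlinarith [mul_pos (by linarith : (0:ℝ) < 1/4 - γ (t+1)) (pow_pos hr 2)]
    linarith
  have hsq : (alQ γ t w)^2 = w - dd γ t := Real.sq_sqrt hnn
  refine ⟨hsq, ?_, Real.sqrt_nonneg _⟩
  have hle : w - dd γ t ≤ (r γ t/2)^2 := by
    simp only [dd]; nlinarith
  calc alQ γ t w = Real.sqrt (w - dd γ t) := rfl
    _ ≤ Real.sqrt ((r γ t/2)^2) := Real.sqrt_le_sqrt hle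
    _ = r γ t/2 := Real.sqrt_sq (by linarith)

lemma factor_split (hγ : Hγ γ) {t : ℕ} {w : ℝ} (hw : |w| ≤ r γ (t+1)/2) :
    Gp γ (t+1) - C w = (Gp γ t - C (alQ γ t w)) * (Gp γ t - C (-(alQ γ t w))) := by
  obtain ⟨hsq, _, _⟩ := alpha_facts γ hγ hw
  rw [Gp_succ]
  have : (C (alQ γ t w) : Polynomial ℝ) * C (alQ γ t w) = C (w - dd γ t) := by
    rw [← C_mul, ← hsq]; ring_nf
  rw [map_neg]
  linear_combination this + C_sub (a := w) (b := dd γ t)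

lemma SAt_split (hγ : Hγ γ) {t : ℕ} {w : ℝ} (hw : |w| ≤ r γ (t+1)/2) (f : Polynomial ℝ) :
    SAt γ (t+1) w f = SAt γ t (alQ γ t w) f + SAt γ t (-(alQ γ t w)) f := by
  unfold SAt
  rw [factor_split γ hγ hw, roots_mul (mul_ne_zero (Gp_sub_monic γ t _).ne_zero
    (Gp_sub_monic γ t _).ne_zero), Multiset.map_add, Multiset.sum_add]

lemma Gp_zero_sub (w : ℝ) : Gp γ 0 - C w = X - C (1/2 + w) := by
  simp only [Gp, P, r]
  rw [C_add, show (1 : Polynomial ℝ) = C 1 by simp,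
    show (C (1:ℝ) : Polynomial ℝ) = C (1/2) + C (1/2) from by rw [← C_add]; norm_num]
  ring

lemma SAt_zero_lvl (w : ℝ) (f : Polynomial ℝ) : SAt γ 0 w f = f.eval (1/2 + w) := by
  unfold SAt
  rw [Gp_zero_sub, roots_X_sub_C]
  simp

lemma roots_card (hγ : Hγ γ) : ∀ t (w : ℝ), |w| ≤ r γ t/2 →
    ((Gp γ t - C w).roots).card = 2^t := by
  intro t
  induction t with
  | zero => intro w hw; rw [Gp_zero_sub, roots_X_sub_C]; simp
  | succ t ih =>
    intro w hw
    obtain ⟨hsq, hle, hnn⟩ := alpha_facts γ hγ hw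
    rw [factor_split γ hγ hw, roots_mul (mul_ne_zero (Gp_sub_monic γ t _).ne_zero
      (Gp_sub_monic γ t _).ne_zero), Multiset.card_add,
      ih _ (by rwa [abs_of_nonneg hnn]), ih _ (by rwa [abs_neg, abs_of_nonneg hnn])]
    ring

lemma mem_roots_eval {t : ℕ} {w : ℝ} {x : ℝ} (hx : x ∈ (Gp γ t - C w).roots) :
    (Gp γ t).eval x = w := by
  have := isRoot_of_mem_roots hx
  simp only [IsRoot, eval_sub, eval_C] at this
  linarith

lemma SAt_comp (hγ : Hγ γ) {t : ℕ} {w : ℝ} (hw : |w| ≤ r γ t/2) (F : Polynomial ℝ) :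
    SAt γ t w (F.comp (Gp γ t)) = 2^t * F.eval w := by
  unfold SAt
  rw [Multiset.map_congr rfl (fun x hx => by
    rw [eval_comp, mem_roots_eval γ hx])]
  rw [Multiset.map_const', Multiset.sum_replicate, roots_card γ hγ t w hw]
  simp [nsmul_eq_mul]

lemma SAt_divmod (t : ℕ) (β : ℝ) (p : Polynomial ℝ) :
    SAt γ t β p = SAt γ t β (p %ₘ Gp γ t) + β * SAt γ t β (p /ₘ Gp γ t) := by
  unfold SAt
  rw [← Multiset.sum_map_mul_left, ← Multiset.sum_map_add]
  apply congrArg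
  apply Multiset.map_congr rfl
  intro x hx
  conv_lhs => rw [← modByMonic_add_div p (Gp γ t)]
  rw [eval_add, eval_mul, mem_roots_eval γ hx]

lemma divmod_deg {t : ℕ} {p : Polynomial ℝ} (hp : p.natDegree < 2^(t+1)) :
    (p %ₘ Gp γ t).natDegree < 2^t ∧ (p /ₘ Gp γ t).natDegree < 2^t := by
  constructor
  · have h := natDegree_modByMonic_lt p (Gp_monic γ t)
      (fun h1 => by have := Gp_natDegree_pos γ t; rw [h1] at this; simp at this)
    rwa [Gp_natDegree] at h
  · rw [natDegree_divByMonic _ (Gp_monic γ t), Gp_natDegree]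
    have : (2:ℕ)^(t+1) = 2^t + 2^t := by ring
    omega

lemma FS (hγ : Hγ γ) : ∀ t (p : Polynomial ℝ), p.natDegree < 2^t →
    ∀ (w w' : ℝ), |w| ≤ r γ t/2 → |w'| ≤ r γ t/2 → SAt γ t w p = SAt γ t w' p := by
  intro t
  induction t with
  | zero =>
    intro p hp w w' _ _
    have : p = C (p.coeff 0) := eq_C_of_natDegree_eq_zero (by omega)
    rw [this, SAt_zero_lvl, SAt_zero_lvl]
    simp
  | succ t ih =>
    intro p hp w w' hw hw'
    obtain ⟨hd0, hd1⟩ := divmod_deg γ (t := t) (p := p) hp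
    have key : ∀ (v : ℝ), |v| ≤ r γ (t+1)/2 →
        SAt γ (t+1) v p = 2 * SAt γ t 0 (p %ₘ Gp γ t) := by
      intro v hv
      obtain ⟨hsq, hle, hnn⟩ := alpha_facts γ hγ hv
      have ha : |alQ γ t v| ≤ r γ t/2 := by rwa [abs_of_nonneg hnn]
      have hna : |-(alQ γ t v)| ≤ r γ t/2 := by rwa [abs_neg, abs_of_nonneg hnn]
      have h0 : |(0:ℝ)| ≤ r γ t/2 := by
        rw [abs_zero]; have := r_pos γ hγ t; linarith
      rw [SAt_split γ hγ hv, SAt_divmod γ t (alQ γ t v) p, SAt_divmod γ t (-(alQ γ t v)) p]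
      rw [ih _ hd0 _ _ ha h0, ih _ hd0 _ _ hna h0, ih _ hd1 _ _ ha h0, ih _ hd1 _ _ hna h0]
      ring
    rw [key w hw, key w' hw']

lemma TP (hγ : Hγ γ) {t : ℕ} (p F : Polynomial ℝ) (hp : p.natDegree < 2^t) :
    ∀ j, t ≤ j → ∀ (w : ℝ), |w| ≤ r γ j/2 →
    SAt γ j w (p * F.comp (Gp γ t)) = (SAt γ t 0 p / 2^t) * SAt γ j w (F.comp (Gp γ t)) := by
  intro j hj
  induction j, hj using Nat.le_induction with
  | base =>
    intro w hw
    have h0 : |(0:ℝ)| ≤ r γ t/2 := by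
      rw [abs_zero]; have := r_pos γ hγ t; linarith
    have hL : SAt γ t w (p * F.comp (Gp γ t)) = SAt γ t w p * F.eval w := by
      unfold SAt
      rw [← Multiset.sum_map_mul_right]
      apply congrArg
      apply Multiset.map_congr rfl
      intro x hx
      rw [eval_mul, eval_comp, mem_roots_eval γ hx]
    rw [hL, SAt_comp γ hγ hw, FS γ hγ t p hp w 0 hw h0]
    field_simp
  | succ j hj ihj =>
    intro w hw
    obtain ⟨hsq, hle, hnn⟩ := alpha_facts γ hγ hw
    have ha : |alQ γ j w| ≤ r γ j/2 := by rwa [abs_of_nonneg hnn]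
    have hna : |-(alQ γ j w)| ≤ r γ j/2 := by rwa [abs_neg, abs_of_nonneg hnn]
    rw [SAt_split γ hγ hw, SAt_split γ hγ hw, ihj _ ha, ihj _ hna]
    ring

lemma VAL (hγ : Hγ γ) : ∀ k j (x : ℝ), x ∈ (Gp γ (j+k)).roots →
    |(Gp γ j).eval x| ≤ r γ j/2 := by
  intro k
  induction k with
  | zero =>
    intro j x hx
    have : (Gp γ j).eval x = 0 := by
      have h2 : x ∈ (Gp γ j - C 0).roots := by simpa using hx
      simpa using mem_roots_eval γ h2
    rw [this, abs_zero]
    have := r_pos γ hγ j; linarith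
  | succ k ih =>
    intro j x hx
    have hx' : x ∈ (Gp γ ((j+1)+k)).roots := by
      convert hx using 3; omega
    have h1 := ih (j+1) x hx'
    have h2 : ((Gp γ j).eval x)^2 ≤ (r γ j/2)^2 := by
      have he : (Gp γ (j+1)).eval x = ((Gp γ j).eval x)^2 + dd γ j := by
        rw [Gp_succ]; simp
      have := abs_le.mp h1
      simp only [dd] at *
      nlinarith [r_pos γ hγ (j+1)]
    have := abs_le_of_sq_le_sq h2 (by have := r_pos γ hγ j; linarith)
    exact this

section Meas

variable (μ : MeasureTheory.Measure ℝ)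

noncomputable def Iu (f : Polynomial ℝ) : ℝ := ∫ x, f.eval x ∂μ

def Hconv (γ : ℕ → ℝ) (μ : MeasureTheory.Measure ℝ) : Prop :=
  ∀ p : Polynomial ℝ,
    Tendsto (fun s => nuInt γ s (fun x => p.eval x)) atTop (nhds (∫ x, p.eval x ∂μ))

lemma nuInt_eq_SAt (m : ℕ) (f : Polynomial ℝ) :
    nuInt γ m (fun x => f.eval x) = SAt γ m 0 f / 2^m := by
  unfold nuInt SAt Gp
  rw [map_zero, sub_zero]

lemma hconv' (hμconv : Hconv γ μ) (f : Polynomial ℝ) :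
    Tendsto (fun m => SAt γ m 0 f / 2^m) atTop (nhds (Iu μ f)) := by
  have := hμconv f
  simp_rw [nuInt_eq_SAt] at this
  exact this

lemma SAt_p_eq (hγ : Hγ γ) {t : ℕ} (p : Polynomial ℝ) (hp : p.natDegree < 2^t)
    {m : ℕ} (hm : t ≤ m) : SAt γ m 0 p / 2^m = SAt γ t 0 p / 2^t := by
  have h0m : |(0:ℝ)| ≤ r γ m/2 := by
    rw [abs_zero]; have := r_pos γ hγ m; linarith
  have h1 := TP γ hγ p 1 hp m hm 0 h0m
  rw [one_comp, mul_one] at h1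
  have h2 : SAt γ m 0 (1:Polynomial ℝ) = 2^m := by
    have := SAt_comp γ hγ (t := m) (w := 0) (F := 1) h0m
    rw [one_comp] at this
    simpa using this
  rw [h1, h2]
  field_simp

lemma F1 (hγ : Hγ γ) (hμconv : Hconv γ μ) {t : ℕ} (p F : Polynomial ℝ)
    (hp : p.natDegree < 2^t) :
    Iu μ (p * F.comp (Gp γ t)) = Iu μ p * Iu μ (F.comp (Gp γ t)) := by
  have h1 := hconv' γ μ hμconv (p * F.comp (Gp γ t))
  have h2 := hconv' γ μ hμconv (F.comp (Gp γ t))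
  have h3 := hconv' γ μ hμconv p
  have key : ∀ m, t ≤ m → SAt γ m 0 (p * F.comp (Gp γ t)) / 2^m
      = (SAt γ m 0 p / 2^m) * (SAt γ m 0 (F.comp (Gp γ t)) / 2^m) := by
    intro m hm
    have h0m : |(0:ℝ)| ≤ r γ m/2 := by
      rw [abs_zero]; have := r_pos γ hγ m; linarith
    rw [TP γ hγ p F hp m hm 0 h0m, SAt_p_eq γ hγ p hp hm]
    ring
  have := (h3.mul h2).congr'
    (by filter_upwards [eventually_ge_atTop t] with m hm using (key m hm).symm)
  exact tendsto_nhds_unique h1 this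

lemma SAt_Gp_at (hγ : Hγ γ) {t : ℕ} {β : ℝ} (hβ : |β| ≤ r γ t/2) :
    SAt γ t β (Gp γ t) = 2^t * β := by
  have := SAt_comp γ hγ (t := t) (w := β) (F := X) hβ
  rw [X_comp] at this
  simpa using this

lemma odd0 (hγ : Hγ γ) (hμconv : Hconv γ μ) (t : ℕ) (F : Polynomial ℝ) :
    Iu μ (Gp γ t * F.comp (Gp γ (t+1))) = 0 := by
  have h1 := hconv' γ μ hμconv (Gp γ t * F.comp (Gp γ (t+1)))
  have hdeg : (Gp γ t).natDegree < 2^(t+1) := by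
    rw [Gp_natDegree]
    have : (2:ℕ)^(t+1) = 2^t + 2^t := by ring
    have := pow_pos (show 0 < 2 by norm_num) t
    omega
  have hS : SAt γ (t+1) 0 (Gp γ t) = 0 := by
    have h0 : |(0:ℝ)| ≤ r γ (t+1)/2 := by
      rw [abs_zero]; have := r_pos γ hγ (t+1); linarith
    obtain ⟨hsq, hle, hnn⟩ := alpha_facts γ hγ h0
    have ha : |alQ γ t 0| ≤ r γ t/2 := by rwa [abs_of_nonneg hnn]
    have hna : |-(alQ γ t 0)| ≤ r γ t/2 := by rwa [abs_neg, abs_of_nonneg hnn]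
    rw [SAt_split γ hγ h0, SAt_Gp_at γ hγ ha, SAt_Gp_at γ hγ hna]
    ring
  have key : ∀ m, t+1 ≤ m → SAt γ m 0 (Gp γ t * F.comp (Gp γ (t+1))) / 2^m = 0 := by
    intro m hm
    have h0m : |(0:ℝ)| ≤ r γ m/2 := by
      
      rw [abs_zero]; have := r_pos γ hγ m; linarith
    rw [TP γ hγ (Gp γ t) F hdeg m hm 0 h0m, hS]
    simp
  have : Tendsto (fun m => SAt γ m 0 (Gp γ t * F.comp (Gp γ (t+1))) / 2^m) atTop (nhds 0) := by
    apply Tendsto.congr' (f₁ := fun _ => (0:ℝ))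
    · filter_upwards [eventually_ge_atTop (t+1)] with m hm using (key m hm).symm
    · exact tendsto_const_nhds
  exact tendsto_nhds_unique h1 this

lemma Imean0 (hγ : Hγ γ) (hμconv : Hconv γ μ) (t : ℕ) : Iu μ (Gp γ t) = 0 := by
  have := odd0 γ μ hγ hμconv t 1
  rwa [one_comp, mul_one] at this

lemma oddmom (hγ : Hγ γ) (hμconv : Hconv γ μ) (t j : ℕ) :
    Iu μ ((Gp γ (t+1))^(2*j+1)) = 0 := by
  have hcomp : (Gp γ (t+1))^(2*j+1)
      = Gp γ (t+1) * ((X - C (dd γ (t+1)))^j).comp (Gp γ (t+2)) := by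
    rw [pow_comp, sub_comp, X_comp, C_comp]
    rw [show Gp γ (t+2) = (Gp γ (t+1))^2 + C (dd γ (t+1)) from Gp_succ γ (t+1)]
    ring
  rw [hcomp]
  exact odd0 γ μ hγ hμconv (t+1) _

lemma nonnegI (hγ : Hγ γ) (hμconv : Hconv γ μ) (q : Polynomial ℝ) (m₀ : ℕ)
    (h : ∀ m, m₀ ≤ m → ∀ x ∈ (Gp γ m).roots, 0 ≤ q.eval x) : 0 ≤ Iu μ q := by
  apply ge_of_tendsto (hconv' γ μ hμconv q)
  filter_upwards [eventually_ge_atTop m₀] with m hm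
  apply div_nonneg _ (by positivity)
  apply Multiset.sum_nonneg
  intro y hy
  rw [Multiset.mem_map] at hy
  obtain ⟨x, hx, rfl⟩ := hy
  have hx' : x ∈ (Gp γ m).roots := by
    have : Gp γ m - C 0 = Gp γ m := by rw [map_zero, sub_zero]
    rwa [this] at hx
  exact h m hm x hx'

end Meas

section Meas2

variable (μ : MeasureTheory.Measure ℝ)

def Hint (μ : MeasureTheory.Measure ℝ) : Prop :=
  ∀ p : Polynomial ℝ, MeasureTheory.Integrable (fun x => p.eval x) μ

def Hpos (μ : MeasureTheory.Measure ℝ) : Prop :=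
  ∀ p : Polynomial ℝ, p ≠ 0 → 0 < ∫ x, (p.eval x)^2 ∂μ

lemma Iu_add (hint : Hint μ) (f g : Polynomial ℝ) : Iu μ (f + g) = Iu μ f + Iu μ g := by
  unfold Iu
  simp_rw [eval_add]
  exact MeasureTheory.integral_add (hint f) (hint g)

lemma Iu_sub (hint : Hint μ) (f g : Polynomial ℝ) : Iu μ (f - g) = Iu μ f - Iu μ g := by
  unfold Iu
  simp_rw [eval_sub]
  exact MeasureTheory.integral_sub (hint f) (hint g)

lemma Iu_Cmul (c : ℝ) (f : Polynomial ℝ) : Iu μ (C c * f) = c * Iu μ f := by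
  unfold Iu
  simp_rw [eval_mul, eval_C]
  exact MeasureTheory.integral_const_mul c _

lemma Iu_sq_nonneg (f : Polynomial ℝ) : 0 ≤ Iu μ (f * f) := by
  unfold Iu
  apply MeasureTheory.integral_nonneg
  intro x
  simp only [eval_mul]
  exact mul_self_nonneg _

lemma Iu_sq_pos (hpos : Hpos μ) (f : Polynomial ℝ) (hf : f ≠ 0) : 0 < Iu μ (f * f) := by
  have := hpos f hf
  unfold Iu
  simp_rw [eval_mul]
  simpa [sq] using this

lemma Iu_sum {ι : Type*} (hint : Hint μ) (s : Finset ι) (g : ι → Polynomial ℝ) :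
    Iu μ (∑ i ∈ s, g i) = ∑ i ∈ s, Iu μ (g i) := by
  unfold Iu
  rw [show (fun x => eval x (∑ i ∈ s, g i)) = fun x => ∑ i ∈ s, eval x (g i) from
    funext fun x => by rw [eval_finset_sum]]
  exact MeasureTheory.integral_finset_sum s (fun i _ => hint (g i))

lemma comp_ne_zero {f : Polynomial ℝ} (hf : f ≠ 0) (g : Polynomial ℝ)
    (hg : g.Monic) (hgd : g.natDegree ≠ 0) : f.comp g ≠ 0 := by
  intro h
  have : (f.comp g).leadingCoeff = 0 := by rw [h]; simp
  rw [leadingCoeff_comp hgd, hg.leadingCoeff] at this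
  simp at this
  exact hf this

lemma coeff_comp_neg (f : Polynomial ℝ) (i : ℕ) :
    (f.comp (-X)).coeff i = (-1)^i * f.coeff i := by
  induction f using Polynomial.induction_on' with
  | add p q hp hq => rw [add_comp, coeff_add, hp, hq, coeff_add]; ring
  | monomial n a =>
    rw [← C_mul_X_pow_eq_monomial, mul_comp, C_comp, pow_comp, X_comp]
    rw [show (-X : Polynomial ℝ) = C (-1) * X from by simp, mul_pow, ← C_pow,
      mul_left_comm, coeff_C_mul, coeff_C_mul, coeff_X_pow]
    by_cases h : i = n
    · subst h; simp
    · simp [h]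

end Meas2

section OPs

variable (μ : MeasureTheory.Measure ℝ)

lemma Iu_comp_expand (hint : Hint μ) (f g : Polynomial ℝ) :
    Iu μ (f.comp g) = ∑ i ∈ Finset.range (f.natDegree + 1), f.coeff i * Iu μ (g^i) := by
  have hf : f = ∑ i ∈ Finset.range (f.natDegree + 1), C (f.coeff i) * X^i := by
    conv_lhs => rw [f.as_sum_range' (f.natDegree+1) (by omega)]
    apply Finset.sum_congr rfl
    intro i _
    rw [C_mul_X_pow_eq_monomial]
  have hcomp : (∑ i ∈ Finset.range (f.natDegree + 1),
      (C (f.coeff i) * X^i).comp g) = ∑ i ∈ Finset.range (f.natDegree + 1),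
      C (f.coeff i) * g^i :=
    Finset.sum_congr rfl (fun i _ => by rw [mul_comp, C_comp, pow_comp, X_comp])
  conv_lhs => rw [hf]
  rw [Polynomial.sum_comp, hcomp, Iu_sum μ hint]
  exact Finset.sum_congr rfl (fun i _ => Iu_Cmul μ _ _)

lemma Iodd (hγ : Hγ γ) (hμconv : Hconv γ μ) (hint : Hint μ) (t : ℕ) (f : Polynomial ℝ)
    (hf : f.comp (-X) = -f) : Iu μ (f.comp (Gp γ (t+1))) = 0 := by
  rw [Iu_comp_expand μ hint]
  apply Finset.sum_eq_zero
  intro i _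
  rcases Nat.even_or_odd i with he | ho
  · have h1 : f.coeff i = 0 := by
      have := coeff_comp_neg f i
      rw [hf, coeff_neg, he.neg_one_pow, one_mul] at this
      linarith
    rw [h1, zero_mul]
  · obtain ⟨j, hj⟩ := ho
    rw [show i = 2*j+1 from by omega, oddmom γ μ hγ hμconv t j, mul_zero]

/-- monic orthogonal polynomials for the pushforward under `Gp γ (t+1)` -/
noncomputable def RR (γ : ℕ → ℝ) (μ : MeasureTheory.Measure ℝ) (t : ℕ) : ℕ → Polynomial ℝ
  | 0 => 1
  | 1 => X
  | (k+2) =>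
      X * RR γ μ t (k+1)
        - C ((Iu μ (((RR γ μ t (k+1)) * (RR γ μ t (k+1))).comp (Gp γ (t+1)))) /
             (Iu μ (((RR γ μ t k) * (RR γ μ t k)).comp (Gp γ (t+1))))) * RR γ μ t k

noncomputable def uu (γ : ℕ → ℝ) (μ : MeasureTheory.Measure ℝ) (t k : ℕ) : ℝ :=
  Iu μ ((RR γ μ t k * RR γ μ t k).comp (Gp γ (t+1)))

noncomputable def aa (γ : ℕ → ℝ) (μ : MeasureTheory.Measure ℝ) (t k : ℕ) : ℝ :=
  uu γ μ t k / uu γ μ t (k-1)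

noncomputable def BL (γ : ℕ → ℝ) (μ : MeasureTheory.Measure ℝ) (t : ℕ)
    (f g : Polynomial ℝ) : ℝ := Iu μ ((f * g).comp (Gp γ (t+1)))

lemma RR_rec (t k : ℕ) :
    RR γ μ t (k+2) = X * RR γ μ t (k+1) - C (aa γ μ t (k+1)) * RR γ μ t k := by
  rfl

lemma BL_self (t k : ℕ) : BL γ μ t (RR γ μ t k) (RR γ μ t k) = uu γ μ t k := rfl

lemma RR_monic_deg (t : ℕ) : ∀ k, (RR γ μ t k).Monic ∧ (RR γ μ t k).natDegree = k
  | 0 => ⟨monic_one, natDegree_one⟩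
  | 1 => ⟨monic_X, natDegree_X⟩
  | (k+2) => by
    obtain ⟨hm1, hd1⟩ := RR_monic_deg t (k+1)
    obtain ⟨hm0, hd0⟩ := RR_monic_deg t k
    have hmX : (X * RR γ μ t (k+1)).Monic := monic_X.mul hm1
    have hdX : (X * RR γ μ t (k+1)).natDegree = k+2 := by
      rw [monic_X.natDegree_mul hm1, natDegree_X, hd1]
      omega
    have hlt : (C (aa γ μ t (k+1)) * RR γ μ t k).degree < (X * RR γ μ t (k+1)).degree := by
      apply lt_of_le_of_lt (degree_mul_le _ _)
      rw [degree_eq_natDegree hmX.ne_zero, hdX]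
      apply lt_of_le_of_lt (add_le_add degree_C_le le_rfl)
      rw [zero_add, degree_eq_natDegree hm0.ne_zero, hd0]
      exact_mod_cast by omega
    constructor
    · rw [RR_rec]
      exact hmX.sub_of_left hlt
    · have h2 := natDegree_eq_of_degree_eq (degree_sub_eq_left_of_degree_lt hlt)
      rw [RR_rec, h2, hdX]

lemma RR_ne_zero (t k : ℕ) : RR γ μ t k ≠ 0 := (RR_monic_deg γ μ t k).1.ne_zero

lemma uu_pos (hpos : Hpos μ) (t k : ℕ) : 0 < uu γ μ t k := by
  unfold uu
  rw [show (RR γ μ t k * RR γ μ t k).comp (Gp γ (t+1))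
      = (RR γ μ t k).comp (Gp γ (t+1)) * (RR γ μ t k).comp (Gp γ (t+1)) from mul_comp _ _ _]
  apply Iu_sq_pos μ hpos
  exact comp_ne_zero (RR_ne_zero γ μ t k) _ (Gp_monic γ (t+1)) (by
    rw [Gp_natDegree]; positivity)

lemma RR_parity (t : ℕ) : ∀ k, (RR γ μ t k).comp (-X) = (-1)^k * RR γ μ t k
  | 0 => by simp [RR]
  | 1 => by simp [RR]
  | (k+2) => by
    have h1 := RR_parity t (k+1)
    have h0 := RR_parity t k
    rw [RR_rec, sub_comp, mul_comp, mul_comp, X_comp, C_comp, h1, h0]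
    ring

lemma BL_parity_zero (hγ : Hγ γ) (hμconv : Hconv γ μ) (hint : Hint μ) (t : ℕ)
    {m n : ℕ} (h : Odd (m + n)) : BL γ μ t (RR γ μ t m) (X^n) = 0 := by
  unfold BL
  apply Iodd γ μ hγ hμconv hint
  rw [mul_comp, pow_comp, X_comp, RR_parity, show ((-X : Polynomial ℝ))^n
      = (-1)^n * X^n from neg_pow X n]
  calc (-1)^m * RR γ μ t m * ((-1)^n * X^n)
      = (-1)^(m+n) * (RR γ μ t m * X^n) := by rw [pow_add]; ring
    _ = -(RR γ μ t m * X^n) := by rw [h.neg_one_pow]; ring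

lemma BL_expand (hint : Hint μ) (t : ℕ) (f p : Polynomial ℝ) :
    BL γ μ t f p = ∑ i ∈ Finset.range (p.natDegree + 1), p.coeff i * BL γ μ t f (X^i) := by
  unfold BL
  have hp : p = ∑ i ∈ Finset.range (p.natDegree + 1), C (p.coeff i) * X^i := by
    conv_lhs => rw [p.as_sum_range' (p.natDegree+1) (by omega)]
    exact Finset.sum_congr rfl (fun i _ => (C_mul_X_pow_eq_monomial).symm)
  have hcomp : (∑ i ∈ Finset.range (p.natDegree + 1),
      (f * (C (p.coeff i) * X^i)).comp (Gp γ (t+1)))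
      = ∑ i ∈ Finset.range (p.natDegree + 1),
          C (p.coeff i) * ((f * X^i).comp (Gp γ (t+1))) :=
    Finset.sum_congr rfl (fun i _ => by
      rw [show f * (C (p.coeff i) * X^i) = C (p.coeff i) * (f * X^i) from by ring,
        mul_comp, C_comp])
  conv_lhs => rw [hp]
  rw [Finset.mul_sum, Polynomial.sum_comp, hcomp, Iu_sum μ hint]
  exact Finset.sum_congr rfl (fun i _ => Iu_Cmul μ _ _)

end OPs

section OPs2

variable (μ : MeasureTheory.Measure ℝ)

lemma BL_zero_right (t : ℕ) (f : Polynomial ℝ) : BL γ μ t f 0 = 0 := by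
  unfold BL Iu
  simp

lemma BL_add_right (hint : Hint μ) (t : ℕ) (f g h : Polynomial ℝ) :
    BL γ μ t f (g + h) = BL γ μ t f g + BL γ μ t f h := by
  unfold BL
  rw [mul_add, add_comp, Iu_add μ hint]

lemma BL_rec_expand (hint : Hint μ) (t k : ℕ) (q : Polynomial ℝ) :
    BL γ μ t (RR γ μ t (k+2)) q
      = BL γ μ t (RR γ μ t (k+1)) (X*q) - aa γ μ t (k+1) * BL γ μ t (RR γ μ t k) q := by
  unfold BL
  rw [show RR γ μ t (k+2) * q
      = RR γ μ t (k+1) * (X*q) - C (aa γ μ t (k+1)) * (RR γ μ t k * q) from by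
    rw [RR_rec]; ring]
  rw [sub_comp, mul_comp (C (aa γ μ t (k+1))), C_comp, Iu_sub μ hint, Iu_Cmul]

lemma BLlow_aux (hint : Hint μ) (t m : ℕ) (p : Polynomial ℝ)
    (horth : ∀ i < m, BL γ μ t (RR γ μ t m) (X^i) = 0) (hp : p.natDegree < m) :
    BL γ μ t (RR γ μ t m) p = 0 := by
  rw [BL_expand γ μ hint]
  apply Finset.sum_eq_zero
  intro i hi
  rw [Finset.mem_range] at hi
  rw [horth i (by omega), mul_zero]

lemma BL_top_aux (hint : Hint μ) (t m : ℕ)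
    (horth : ∀ i < m, BL γ μ t (RR γ μ t m) (X^i) = 0) :
    BL γ μ t (RR γ μ t m) (X^m) = uu γ μ t m := by
  obtain ⟨hm, hd⟩ := RR_monic_deg γ μ t m
  have hsplit : (X:Polynomial ℝ)^m = RR γ μ t m + (X^m - RR γ μ t m) := by ring
  rw [hsplit, BL_add_right γ μ hint, BL_self]
  by_cases h0 : X^m - RR γ μ t m = 0
  · rw [h0, BL_zero_right]; ring
  · have hdeg : (X^m - RR γ μ t m).natDegree < m := by
      have := degree_sub_lt (p := (X:Polynomial ℝ)^m) (q := RR γ μ t m)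
        (by rw [degree_X_pow, degree_eq_natDegree hm.ne_zero, hd])
        (pow_ne_zero m X_ne_zero)
        (by rw [leadingCoeff_X_pow, hm.leadingCoeff])
      have h2 : (X^m - RR γ μ t m).degree < (m : WithBot ℕ) := by
        rwa [degree_X_pow] at this
      exact natDegree_lt_iff_degree_lt h0 |>.mpr h2
    rw [BLlow_aux γ μ hint t m _ horth hdeg]
    ring

lemma RR_orth (hγ : Hγ γ) (hμconv : Hconv γ μ) (hint : Hint μ) (hpos : Hpos μ) (t : ℕ) :
    ∀ k, ∀ i < k, BL γ μ t (RR γ μ t k) (X^i) = 0 := by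
  intro k
  induction k using Nat.strong_induction_on with
  | _ k ih =>
    match k with
    | 0 => intro i hi; omega
    | 1 =>
      intro i hi
      have hi0 : i = 0 := by omega
      subst hi0
      have h : RR γ μ t 1 * X^0 = X := by
        show (X : Polynomial ℝ) * X^0 = X
        ring
      unfold BL
      rw [h, X_comp]
      exact Imean0 γ μ hγ hμconv (t+1)
    | (k+2) =>
      intro i hi
      have hXp : (X : Polynomial ℝ) * X^i = X^(i+1) := by ring
      rw [BL_rec_expand γ μ hint, hXp]
      rcases lt_trichotomy i k with h | h | h
      · rw [ih (k+1) (by omega) (i+1) (by omega), ih k (by omega) i h]; ring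
      · subst h
        rw [BL_top_aux γ μ hint t (i+1) (ih (i+1) (by omega)),
          BL_top_aux γ μ hint t i (ih i (by omega))]
        unfold aa
        simp only [Nat.add_sub_cancel]
        have := uu_pos γ μ hpos t i
        field_simp
        ring
      · have hik : i = k+1 := by omega
        subst hik
        rw [BL_parity_zero γ μ hγ hμconv hint t (show Odd ((k+1) + (k+1+1)) from ⟨k+1, by omega⟩),
          BL_parity_zero γ μ hγ hμconv hint t (show Odd (k + (k+1)) from ⟨k, by omega⟩)]
        ring

lemma RR_orth_poly (hγ : Hγ γ) (hμconv : Hconv γ μ) (hint : Hint μ) (hpos : Hpos μ)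
    (t : ℕ) {k : ℕ} {p : Polynomial ℝ} (hp : p.natDegree < k) :
    BL γ μ t (RR γ μ t k) p = 0 :=
  BLlow_aux γ μ hint t k p (RR_orth γ μ hγ hμconv hint hpos t k) hp

lemma BL_RR_top (hγ : Hγ γ) (hμconv : Hconv γ μ) (hint : Hint μ) (hpos : Hpos μ)
    (t m : ℕ) : BL γ μ t (RR γ μ t m) (X^m) = uu γ μ t m :=
  BL_top_aux γ μ hint t m (RR_orth γ μ hγ hμconv hint hpos t m)

end OPs2

section OPs3

variable (μ : MeasureTheory.Measure ℝ)

lemma Iu_zero : Iu μ 0 = 0 := by simp [Iu]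

lemma mod_deg_lt (t : ℕ) (p : Polynomial ℝ) : (p %ₘ Gp γ t).natDegree < 2^t := by
  have h := natDegree_modByMonic_lt p (Gp_monic γ t)
    (fun h1 => by have := Gp_natDegree_pos γ t; rw [h1] at this; simp at this)
  rwa [Gp_natDegree] at h

lemma ORTC (hγ : Hγ γ) (hμconv : Hconv γ μ) (hint : Hint μ) (hpos : Hpos μ) (t : ℕ) :
    ∀ k j, k ≤ j → ∀ p : Polynomial ℝ, p.natDegree < 2^(t+1)*k →
    Iu μ (p * (RR γ μ t j).comp (Gp γ (t+1))) = 0 := by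
  intro k
  induction k with
  | zero => intro j hj p hp; simp at hp
  | succ k ih =>
    intro j hj p hp
    obtain ⟨j', rfl⟩ : ∃ j'', j = j'' + 1 := ⟨j - 1, by omega⟩
    have hIRR : ∀ m, 1 ≤ m → Iu μ ((RR γ μ t m).comp (Gp γ (t+1))) = 0 := by
      intro m hm
      have h := RR_orth_poly γ μ hγ hμconv hint hpos t (k := m) (p := 1)
        (by rw [natDegree_one]; omega)
      unfold BL at h
      rwa [mul_one] at h
    have hd0 : (p %ₘ Gp γ (t+1)).natDegree < 2^(t+1) := mod_deg_lt γ (t+1) p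
    have hcomprec : Gp γ (t+1) * (RR γ μ t (j'+1)).comp (Gp γ (t+1))
        = (RR γ μ t (j'+2)).comp (Gp γ (t+1))
          + C (aa γ μ t (j'+1)) * (RR γ μ t j').comp (Gp γ (t+1)) := by
      have h := congrArg (fun q : Polynomial ℝ => q.comp (Gp γ (t+1)))
        (show (X : Polynomial ℝ) * RR γ μ t (j'+1)
          = RR γ μ t (j'+2) + C (aa γ μ t (j'+1)) * RR γ μ t j' from by
            rw [RR_rec]; ring)
      simpa only [mul_comp, add_comp, X_comp, C_comp] using h
    have key : p * (RR γ μ t (j'+1)).comp (Gp γ (t+1))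
        = (p %ₘ Gp γ (t+1)) * (RR γ μ t (j'+1)).comp (Gp γ (t+1))
          + ((p /ₘ Gp γ (t+1)) * (RR γ μ t (j'+2)).comp (Gp γ (t+1))
            + C (aa γ μ t (j'+1))
              * ((p /ₘ Gp γ (t+1)) * (RR γ μ t j').comp (Gp γ (t+1)))) := by
      conv_lhs => rw [← modByMonic_add_div p (Gp γ (t+1))]
      rw [add_mul]
      rw [show Gp γ (t+1) * (p /ₘ Gp γ (t+1)) * (RR γ μ t (j'+1)).comp (Gp γ (t+1))
          = (p /ₘ Gp γ (t+1)) * (Gp γ (t+1) * (RR γ μ t (j'+1)).comp (Gp γ (t+1))) from by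
        ring, hcomprec]
      ring
    have hz : ∀ m, k ≤ m → Iu μ ((p /ₘ Gp γ (t+1)) * (RR γ μ t m).comp (Gp γ (t+1))) = 0 := by
      intro m hm
      by_cases h0 : p /ₘ Gp γ (t+1) = 0
      · rw [h0, zero_mul, Iu_zero]
      · have hge : 2^(t+1) ≤ p.natDegree := by
          by_contra hcon
          apply h0
          apply (divByMonic_eq_zero_iff (Gp_monic γ (t+1))).mpr
          apply lt_of_le_of_lt (degree_le_natDegree)
          rw [degree_eq_natDegree (Gp_monic γ (t+1)).ne_zero, Gp_natDegree]
          exact_mod_cast by omega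
        have hd1 : (p /ₘ Gp γ (t+1)).natDegree < 2^(t+1)*k := by
          rw [natDegree_divByMonic _ (Gp_monic γ (t+1)), Gp_natDegree]
          have h2 : p.natDegree < 2^(t+1)*k + 2^(t+1) := by
            have : 2^(t+1)*(k+1) = 2^(t+1)*k + 2^(t+1) := by ring
            omega
          omega
        exact ih m hm _ hd1
    rw [key, Iu_add μ hint, Iu_add μ hint, Iu_Cmul,
      F1 γ μ hγ hμconv _ (RR γ μ t (j'+1)) hd0, hIRR (j'+1) (by omega),
      hz (j'+2) (by omega), hz j' (by omega)]
    ring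

end OPs3

section QL

variable (μ : MeasureTheory.Measure ℝ) (Q : ℕ → Polynomial ℝ)

def HQ (μ : MeasureTheory.Measure ℝ) (Q : ℕ → Polynomial ℝ) : Prop :=
  (∀ n, (Q n).Monic) ∧ (∀ n, (Q n).natDegree = n) ∧
    ∀ n : ℕ, ∀ p : Polynomial ℝ, p.degree < (n : WithBot ℕ) →
      ∫ x, (Q n).eval x * p.eval x ∂μ = 0

noncomputable def In (μ : MeasureTheory.Measure ℝ) (Q : ℕ → Polynomial ℝ) (n : ℕ) : ℝ :=
  ∫ x, ((Q n).eval x)^2 ∂μ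

lemma In_eq_Iu (n : ℕ) : In μ Q n = Iu μ (Q n * Q n) := by
  unfold In Iu
  simp_rw [eval_mul, sq]

lemma In_pos (hpos : Hpos μ) (hQ : HQ μ Q) (n : ℕ) : 0 < In μ Q n := by
  rw [In_eq_Iu]
  exact Iu_sq_pos μ hpos _ (hQ.1 n).ne_zero

lemma Iu_orth (hQ : HQ μ Q) (n : ℕ) (p : Polynomial ℝ) (hp : p.degree < (n : WithBot ℕ)) :
    Iu μ (Q n * p) = 0 := by
  have := hQ.2.2 n p hp
  unfold Iu
  simp_rw [eval_mul]
  exact this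

lemma Qeq (hint : Hint μ) (hpos : Hpos μ) (hQ : HQ μ Q) (n : ℕ) (f : Polynomial ℝ)
    (hf1 : f.Monic) (hf2 : f.natDegree = n)
    (horth : ∀ p : Polynomial ℝ, p.natDegree < n → Iu μ (f * p) = 0) : f = Q n := by
  by_contra hne
  have hg : f - Q n ≠ 0 := sub_ne_zero.mpr hne
  have hdeg : (f - Q n).degree < (n : WithBot ℕ) := by
    have h := degree_sub_lt (show f.degree = (Q n).degree by
        rw [degree_eq_natDegree hf1.ne_zero, degree_eq_natDegree (hQ.1 n).ne_zero, hf2, hQ.2.1 n])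
      hf1.ne_zero (by rw [hf1.leadingCoeff, (hQ.1 n).leadingCoeff])
    rwa [degree_eq_natDegree hf1.ne_zero, hf2] at h
  have h1 : Iu μ (Q n * (f - Q n)) = 0 := Iu_orth μ Q hQ n _ hdeg
  have h2 : Iu μ (f * (f - Q n)) = 0 :=
    horth _ ((natDegree_lt_iff_degree_lt hg).mpr hdeg)
  have h3 : Iu μ ((f - Q n) * (f - Q n)) = 0 := by
    have he : (f - Q n) * (f - Q n) = f * (f - Q n) - Q n * (f - Q n) := by ring
    rw [he, Iu_sub μ hint, h1, h2]
    ring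
  have := Iu_sq_pos μ hpos _ hg
  linarith

lemma QRR (hγ : Hγ γ) (hμconv : Hconv γ μ) (hint : Hint μ) (hpos : Hpos μ) (hQ : HQ μ Q)
    (t k : ℕ) : (RR γ μ t k).comp (Gp γ (t+1)) = Q (2^(t+1) * k) := by
  obtain ⟨hm, hd⟩ := RR_monic_deg γ μ t k
  apply Qeq μ Q hint hpos hQ
  · exact hm.comp (Gp_monic γ (t+1)) (by rw [Gp_natDegree]; positivity)
  · rw [natDegree_comp, hd, Gp_natDegree, mul_comm]
  · intro p hp
    rw [mul_comm]
    exact ORTC γ μ hγ hμconv hint hpos t k k le_rfl p hp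

lemma uu_eq_In (hγ : Hγ γ) (hμconv : Hconv γ μ) (hint : Hint μ) (hpos : Hpos μ)
    (hQ : HQ μ Q) (t k : ℕ) : uu γ μ t k = In μ Q (2^(t+1) * k) := by
  rw [In_eq_Iu, ← QRR γ μ Q hγ hμconv hint hpos hQ t k]
  unfold uu
  rw [mul_comp]

lemma MIN (hint : Hint μ) (hpos : Hpos μ) (hQ : HQ μ Q) (n : ℕ) (f : Polynomial ℝ)
    (hf1 : f.Monic) (hf2 : f.natDegree = n) : In μ Q n ≤ Iu μ (f * f) := by
  by_cases h0 : f - Q n = 0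
  · have : f = Q n := by
      have := sub_eq_zero.mp h0; exact this
    rw [this, In_eq_Iu]
  · have hdeg : (f - Q n).degree < (n : WithBot ℕ) := by
      have h := degree_sub_lt (show f.degree = (Q n).degree by
          rw [degree_eq_natDegree hf1.ne_zero, degree_eq_natDegree (hQ.1 n).ne_zero, hf2, hQ.2.1 n])
        hf1.ne_zero (by rw [hf1.leadingCoeff, (hQ.1 n).leadingCoeff])
      rwa [degree_eq_natDegree hf1.ne_zero, hf2] at h
    have h1 : Iu μ (Q n * (f - Q n)) = 0 := Iu_orth μ Q hQ n _ hdeg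
    have key : f * f = Q n * Q n + (Q n * (f - Q n) + (Q n * (f - Q n)
        + (f - Q n) * (f - Q n))) := by ring
    rw [key, Iu_add μ hint, Iu_add μ hint, Iu_add μ hint, h1, ← In_eq_Iu]
    have := Iu_sq_nonneg μ (f - Q n)
    linarith

lemma T2 (hγ : Hγ γ) (hμconv : Hconv γ μ) (hint : Hint μ) (hpos : Hpos μ) (hQ : HQ μ Q)
    (t m : ℕ) : In μ Q (2^(t+1) * (m+1)) ≤ ((r γ (t+1))^2/4) * In μ Q (2^(t+1) * m) := by
  set f := Gp γ (t+1) * Q (2^(t+1) * m) with hf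
  have hfm : f.Monic := (Gp_monic γ (t+1)).mul (hQ.1 _)
  have hfd : f.natDegree = 2^(t+1) * (m+1) := by
    rw [hf, (Gp_monic γ (t+1)).natDegree_mul (hQ.1 _), Gp_natDegree, hQ.2.1]
    ring
  have h1 : In μ Q (2^(t+1)*(m+1)) ≤ Iu μ (f * f) := MIN μ Q hint hpos hQ _ f hfm hfd
  have h2 : 0 ≤ Iu μ (C ((r γ (t+1))^2/4) * (Q (2^(t+1)*m) * Q (2^(t+1)*m)) - f * f) := by
    apply nonnegI γ μ hγ hμconv _ (t+1)
    intro M hM x hx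
    have hval : |(Gp γ (t+1)).eval x| ≤ r γ (t+1)/2 := by
      have := VAL γ hγ (M - (t+1)) (t+1) x (by
        convert hx using 3
        omega)
      exact this
    have hsq : ((Gp γ (t+1)).eval x)^2 ≤ (r γ (t+1))^2/4 := by
      have h := abs_le.mp hval
      nlinarith [r_pos γ hγ (t+1)]
    have he : ((C ((r γ (t+1))^2/4) * (Q (2^(t+1)*m) * Q (2^(t+1)*m)) - f * f)).eval x
        = ((r γ (t+1))^2/4 - ((Gp γ (t+1)).eval x)^2) * ((Q (2^(t+1)*m)).eval x)^2 := by
      rw [hf]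
      simp only [eval_sub, eval_mul, eval_C]
      ring
    rw [he]
    have : 0 ≤ ((Q (2^(t+1)*m)).eval x)^2 := sq_nonneg _
    nlinarith
  rw [Iu_sub μ hint, Iu_Cmul] at h2
  rw [show In μ Q (2^(t+1)*m)
      = Iu μ (Q (2^(t+1)*m) * Q (2^(t+1)*m)) from In_eq_Iu μ Q _]
  linarith

end QL

section Christoffel

variable (μ : MeasureTheory.Measure ℝ) (Q : ℕ → Polynomial ℝ)

noncomputable def rho (γ : ℕ → ℝ) (μ : MeasureTheory.Measure ℝ) (t k : ℕ) : ℝ :=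
  (RR γ μ t k).eval (dd γ t)

noncomputable def cc (γ : ℕ → ℝ) (μ : MeasureTheory.Measure ℝ) (t k : ℕ) : ℝ :=
  rho γ μ t (k+1) / rho γ μ t k

noncomputable def SS (γ : ℕ → ℝ) (μ : MeasureTheory.Measure ℝ) (t k : ℕ) : Polynomial ℝ :=
  (RR γ μ t (k+1) - C (cc γ μ t k) * RR γ μ t k) /ₘ (X - C (dd γ t))

lemma RRsub_monic_deg (t k : ℕ) :
    (RR γ μ t (k+1) - C (cc γ μ t k) * RR γ μ t k).Monic ∧
    (RR γ μ t (k+1) - C (cc γ μ t k) * RR γ μ t k).natDegree = k+1 := by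
  obtain ⟨hm1, hd1⟩ := RR_monic_deg γ μ t (k+1)
  obtain ⟨hm0, hd0⟩ := RR_monic_deg γ μ t k
  have hlt : (C (cc γ μ t k) * RR γ μ t k).degree < (RR γ μ t (k+1)).degree := by
    apply lt_of_le_of_lt (degree_mul_le _ _)
    rw [degree_eq_natDegree hm1.ne_zero, hd1]
    apply lt_of_le_of_lt (add_le_add degree_C_le le_rfl)
    rw [zero_add, degree_eq_natDegree hm0.ne_zero, hd0]
    exact_mod_cast by omega
  exact ⟨hm1.sub_of_left hlt,
    by rw [natDegree_eq_of_degree_eq (degree_sub_eq_left_of_degree_lt hlt), hd1]⟩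

lemma SS_mul_eq (t k : ℕ) (hk : rho γ μ t k ≠ 0) :
    (X - C (dd γ t)) * SS γ μ t k = RR γ μ t (k+1) - C (cc γ μ t k) * RR γ μ t k := by
  unfold SS
  rw [mul_divByMonic_eq_iff_isRoot]
  show eval (dd γ t) _ = 0
  rw [eval_sub, eval_mul, eval_C]
  show rho γ μ t (k+1) - cc γ μ t k * rho γ μ t k = 0
  unfold cc
  field_simp
  ring

lemma SS_monic_deg (t k : ℕ) (hk : rho γ μ t k ≠ 0) :
    (SS γ μ t k).Monic ∧ (SS γ μ t k).natDegree = k := by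
  obtain ⟨hm, hd⟩ := RRsub_monic_deg γ μ t k
  have heq := SS_mul_eq γ μ t k hk
  have hmonic : (SS γ μ t k).Monic := by
    apply Monic.of_mul_monic_left (monic_X_sub_C (dd γ t))
    rw [heq]; exact hm
  refine ⟨hmonic, ?_⟩
  have h2 : ((X - C (dd γ t)) * SS γ μ t k).natDegree = k+1 := by rw [heq, hd]
  rw [(monic_X_sub_C (dd γ t)).natDegree_mul hmonic, natDegree_X_sub_C] at h2
  omega

lemma Gpsq_comp (t : ℕ) :
    ((X - C (dd γ t)) : Polynomial ℝ).comp (Gp γ (t+1)) = (Gp γ t)^2 := by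
  rw [sub_comp, X_comp, C_comp, Gp_succ]
  ring

lemma Qodd (hγ : Hγ γ) (hμconv : Hconv γ μ) (hint : Hint μ) (hpos : Hpos μ) (hQ : HQ μ Q)
    (t k : ℕ) (hk : rho γ μ t k ≠ 0) :
    Gp γ t * (SS γ μ t k).comp (Gp γ (t+1)) = Q (2^t * (2*k+1)) ∧
    In μ Q (2^t * (2*k+1)) = -(cc γ μ t k) * uu γ μ t k := by
  obtain ⟨hSm, hSd⟩ := SS_monic_deg γ μ t k hk
  set f := Gp γ t * (SS γ μ t k).comp (Gp γ (t+1)) with hfdef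
  have hGnd : (Gp γ (t+1)).natDegree ≠ 0 := by rw [Gp_natDegree]; positivity
  have hSGm : ((SS γ μ t k).comp (Gp γ (t+1))).Monic := hSm.comp (Gp_monic γ (t+1)) hGnd
  have hfm : f.Monic := (Gp_monic γ t).mul hSGm
  have hfd : f.natDegree = 2^t * (2*k+1) := by
    rw [hfdef, (Gp_monic γ t).natDegree_mul hSGm, natDegree_comp, hSd,
      Gp_natDegree, Gp_natDegree, pow_succ]
    ring
  have hGsq : (Gp γ t)^2 * (SS γ μ t k).comp (Gp γ (t+1))
      = (RR γ μ t (k+1)).comp (Gp γ (t+1))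
        - C (cc γ μ t k) * (RR γ μ t k).comp (Gp γ (t+1)) := by
    rw [← Gpsq_comp, ← mul_comp, SS_mul_eq γ μ t k hk, sub_comp, mul_comp, C_comp]
  have hassoc : f = (X * ((SS γ μ t k).comp (X^2 + C (dd γ t)))).comp (Gp γ t) := by
    rw [mul_comp, X_comp, comp_assoc, add_comp, pow_comp, X_comp, C_comp, ← Gp_succ]
  have hIf : Iu μ f = 0 := by
    rw [hfdef]
    exact odd0 γ μ hγ hμconv t (SS γ μ t k)
  have horth : ∀ p : Polynomial ℝ, p.natDegree < 2^t * (2*k+1) → Iu μ (f * p) = 0 := by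
    intro p hp
    have hsplit : f * p = (p %ₘ Gp γ t) * ((X * ((SS γ μ t k).comp (X^2 + C (dd γ t)))).comp (Gp γ t))
        + ((p /ₘ Gp γ t) * (RR γ μ t (k+1)).comp (Gp γ (t+1))
          - C (cc γ μ t k) * ((p /ₘ Gp γ t) * (RR γ μ t k).comp (Gp γ (t+1)))) := by
      conv_lhs => rw [show f * p = p * f from mul_comm f p, ← modByMonic_add_div p (Gp γ t)]
      rw [add_mul]
      have h2 : Gp γ t * (p /ₘ Gp γ t) * f
          = (p /ₘ Gp γ t) * ((Gp γ t)^2 * (SS γ μ t k).comp (Gp γ (t+1))) := by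
        rw [hfdef]; ring
      rw [h2, hGsq, ← hassoc]
      ring
    have hzz : ∀ m, k ≤ m → Iu μ ((p /ₘ Gp γ t) * (RR γ μ t m).comp (Gp γ (t+1))) = 0 := by
      intro m hm
      by_cases h0 : p /ₘ Gp γ t = 0
      · rw [h0, zero_mul, Iu_zero]
      · have hge : 2^t ≤ p.natDegree := by
          by_contra hcon
          apply h0
          apply (divByMonic_eq_zero_iff (Gp_monic γ t)).mpr
          apply lt_of_le_of_lt (degree_le_natDegree)
          rw [degree_eq_natDegree (Gp_monic γ t).ne_zero, Gp_natDegree]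
          exact_mod_cast by omega
        have hd1 : (p /ₘ Gp γ t).natDegree < 2^(t+1)*k := by
          rw [natDegree_divByMonic _ (Gp_monic γ t), Gp_natDegree]
          have e1 : 2^t*(2*k+1) = 2^(t+1)*k + 2^t := by rw [pow_succ]; ring
          omega
        exact ORTC γ μ hγ hμconv hint hpos t k m hm _ hd1
    rw [hsplit, Iu_add μ hint, Iu_sub μ hint, Iu_Cmul,
      F1 γ μ hγ hμconv _ _ (mod_deg_lt γ t p), ← hassoc, hIf,
      hzz (k+1) (by omega), hzz k le_rfl]
    ring
  have hQid : f = Q (2^t * (2*k+1)) := Qeq μ Q hint hpos hQ _ f hfm hfd horth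
  refine ⟨hQid, ?_⟩
  have hff : f * f = ((RR γ μ t (k+1) - C (cc γ μ t k) * RR γ μ t k) * SS γ μ t k).comp
      (Gp γ (t+1)) := by
    rw [mul_comp, ← SS_mul_eq γ μ t k hk, mul_comp, Gpsq_comp, hfdef]
    ring
  have hBL1 : BL γ μ t (RR γ μ t (k+1)) (SS γ μ t k) = 0 :=
    RR_orth_poly γ μ hγ hμconv hint hpos t (by rw [hSd]; omega)
  have hBL0 : BL γ μ t (RR γ μ t k) (SS γ μ t k) = uu γ μ t k := by
    obtain ⟨hm0, hd0⟩ := RR_monic_deg γ μ t k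
    have hsplit : SS γ μ t k = RR γ μ t k + (SS γ μ t k - RR γ μ t k) := by ring
    rw [hsplit, BL_add_right γ μ hint, BL_self]
    by_cases h0 : SS γ μ t k - RR γ μ t k = 0
    · rw [h0, BL_zero_right]; ring
    · have hdlt : (SS γ μ t k - RR γ μ t k).natDegree < k := by
        have h := degree_sub_lt (show (SS γ μ t k).degree = (RR γ μ t k).degree by
            rw [degree_eq_natDegree hSm.ne_zero, degree_eq_natDegree hm0.ne_zero, hSd, hd0])
          hSm.ne_zero (by rw [hSm.leadingCoeff, hm0.leadingCoeff])
        rw [degree_eq_natDegree hSm.ne_zero, hSd] at h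
        exact (natDegree_lt_iff_degree_lt h0).mpr h
      rw [RR_orth_poly γ μ hγ hμconv hint hpos t hdlt]
      ring
  have : In μ Q (2^t * (2*k+1)) = Iu μ (f * f) := by
    rw [In_eq_Iu, hQid]
  rw [this, hff]
  have hexp : (RR γ μ t (k+1) - C (cc γ μ t k) * RR γ μ t k) * SS γ μ t k
      = RR γ μ t (k+1) * SS γ μ t k - C (cc γ μ t k) * (RR γ μ t k * SS γ μ t k) := by
    ring
  rw [hexp, sub_comp, mul_comp (C (cc γ μ t k)), C_comp, Iu_sub μ hint, Iu_Cmul]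
  have e1 : Iu μ ((RR γ μ t (k+1) * SS γ μ t k).comp (Gp γ (t+1))) = 0 := hBL1
  have e0 : Iu μ ((RR γ μ t k * SS γ μ t k).comp (Gp γ (t+1))) = uu γ μ t k := hBL0
  rw [e1, e0]
  ring

end Christoffel


section Phi

variable (μ : MeasureTheory.Measure ℝ) (Q : ℕ → Polynomial ℝ)

noncomputable def vv (μ : MeasureTheory.Measure ℝ) (Q : ℕ → Polynomial ℝ) (t k : ℕ) : ℝ :=
  In μ Q (2^t * (2*k+1))

noncomputable def phi (γ : ℕ → ℝ) (μ : MeasureTheory.Measure ℝ) (Q : ℕ → Polynomial ℝ)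
    (t k : ℕ) : ℝ := vv μ Q t k / uu γ μ t k

lemma rho_vv (hγ : Hγ γ) (hμconv : Hconv γ μ) (hint : Hint μ) (hpos : Hpos μ) (hQ : HQ μ Q)
    (t : ℕ) : ∀ k, rho γ μ t k ≠ 0 ∧ vv μ Q t k = -(cc γ μ t k) * uu γ μ t k := by
  intro k
  induction k with
  | zero =>
    have h0 : rho γ μ t 0 ≠ 0 := by
      show (RR γ μ t 0).eval (dd γ t) ≠ 0
      show (1 : Polynomial ℝ).eval (dd γ t) ≠ 0
      simp
    exact ⟨h0, (Qodd γ μ Q hγ hμconv hint hpos hQ t 0 h0).2⟩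
  | succ k ih =>
    obtain ⟨hk, hvv⟩ := ih
    have hvpos : 0 < vv μ Q t k := In_pos μ Q hpos hQ _
    have hupos : 0 < uu γ μ t k := uu_pos γ μ hpos t k
    have hcc : cc γ μ t k < 0 := by nlinarith
    have hk1 : rho γ μ t (k+1) ≠ 0 := by
      have : rho γ μ t (k+1) = cc γ μ t k * rho γ μ t k := by
        unfold cc; field_simp
      rw [this]
      exact mul_ne_zero (ne_of_lt hcc) hk
    exact ⟨hk1, (Qodd γ μ Q hγ hμconv hint hpos hQ t (k+1) hk1).2⟩

lemma phi_pos (hpos : Hpos μ) (hQ : HQ μ Q) (t k : ℕ) : 0 < phi γ μ Q t k :=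
  div_pos (In_pos μ Q hpos hQ _) (uu_pos γ μ hpos t k)

lemma phi_eq_neg_cc (hγ : Hγ γ) (hμconv : Hconv γ μ) (hint : Hint μ) (hpos : Hpos μ)
    (hQ : HQ μ Q) (t k : ℕ) : phi γ μ Q t k = -(cc γ μ t k) := by
  have h := (rho_vv γ μ Q hγ hμconv hint hpos hQ t k).2
  have hupos : 0 < uu γ μ t k := uu_pos γ μ hpos t k
  unfold phi
  rw [h]
  field_simp

lemma rho_zero_one : rho γ μ t 0 = 1 := by
  show (1 : Polynomial ℝ).eval (dd γ t) = 1
  simp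

lemma rho_one_dd : rho γ μ t 1 = dd γ t := by
  show (X : Polynomial ℝ).eval (dd γ t) = dd γ t
  simp

lemma phi_zero (hγ : Hγ γ) (hμconv : Hconv γ μ) (hint : Hint μ) (hpos : Hpos μ)
    (hQ : HQ μ Q) (t : ℕ) : phi γ μ Q t 0 = -(dd γ t) := by
  rw [phi_eq_neg_cc γ μ Q hγ hμconv hint hpos hQ t 0]
  unfold cc
  rw [rho_zero_one, rho_one_dd]
  simp

lemma phi_rec (hγ : Hγ γ) (hμconv : Hconv γ μ) (hint : Hint μ) (hpos : Hpos μ)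
    (hQ : HQ μ Q) (t k : ℕ) :
    phi γ μ Q t (k+1) = -(dd γ t) - aa γ μ t (k+1) / phi γ μ Q t k := by
  have hk := (rho_vv γ μ Q hγ hμconv hint hpos hQ t k).1
  have hk1 := (rho_vv γ μ Q hγ hμconv hint hpos hQ t (k+1)).1
  have hrec : rho γ μ t (k+2) = dd γ t * rho γ μ t (k+1) - aa γ μ t (k+1) * rho γ μ t k := by
    unfold rho
    rw [RR_rec]
    simp [eval_sub, eval_mul, eval_C, eval_X]
  rw [phi_eq_neg_cc γ μ Q hγ hμconv hint hpos hQ t (k+1),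
    phi_eq_neg_cc γ μ Q hγ hμconv hint hpos hQ t k]
  unfold cc
  rw [hrec, div_neg, div_div_eq_mul_div, sub_neg_eq_add, sub_div,
    mul_div_cancel_right₀ _ hk1]
  ring

lemma aa_pos (hpos : Hpos μ) (t k : ℕ) : 0 < aa γ μ t (k+1) := by
  unfold aa
  simp only [Nat.add_sub_cancel]
  exact div_pos (uu_pos γ μ hpos t (k+1)) (uu_pos γ μ hpos t k)

lemma aa_le (hγ : Hγ γ) (hμconv : Hconv γ μ) (hint : Hint μ) (hpos : Hpos μ) (hQ : HQ μ Q)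
    (t k : ℕ) : aa γ μ t (k+1) ≤ (r γ (t+1))^2/4 := by
  unfold aa
  simp only [Nat.add_sub_cancel]
  rw [div_le_iff₀ (uu_pos γ μ hpos t k)]
  rw [uu_eq_In γ μ Q hγ hμconv hint hpos hQ t (k+1), uu_eq_In γ μ Q hγ hμconv hint hpos hQ t k]
  exact T2 γ μ Q hγ hμconv hint hpos hQ t k

noncomputable def csq (γ : ℕ → ℝ) (t : ℕ) : ℝ := 4 * (γ (t+1))^2 / (1 - 2*γ (t+1))^2

noncomputable def psi (γ : ℕ → ℝ) (t : ℕ) : ℝ := (1 + Real.sqrt (1 - 4 * csq γ t)) / 2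

lemma csq_facts (hγ : Hγ γ) (h6 : γ (t+1) ≤ 1/6) : 0 < csq γ t ∧ csq γ t ≤ 1/4 := by
  have h1 := (hγ t).1
  have h2 := (hγ t).2
  have h3 : (0:ℝ) < 1 - 2*γ (t+1) := by linarith
  constructor
  · unfold csq; positivity
  · unfold csq
    rw [div_le_iff₀ (by positivity)]
    nlinarith

lemma psi_facts (hγ : Hγ γ) (h6 : γ (t+1) ≤ 1/6) :
    1/2 ≤ psi γ t ∧ psi γ t ≤ 1 ∧ psi γ t * (1 - psi γ t) = csq γ t := by
  obtain ⟨hc0, hc4⟩ := csq_facts γ hγ h6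
  have hD0 : 0 ≤ Real.sqrt (1 - 4 * csq γ t) := Real.sqrt_nonneg _
  have hD1 : Real.sqrt (1 - 4 * csq γ t) ≤ 1 := Real.sqrt_le_one.mpr (by linarith)
  have hDsq : (Real.sqrt (1 - 4 * csq γ t))^2 = 1 - 4 * csq γ t :=
    Real.sq_sqrt (by linarith)
  refine ⟨by unfold psi; linarith, by unfold psi; linarith, ?_⟩
  unfold psi
  nlinarith [hDsq]

lemma rdd_eq (hγ : Hγ γ) (t : ℕ) : (r γ (t+1))^2/4 = csq γ t * (dd γ t)^2 := by
  have h2 := (hγ t).2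
  have h3 : (1 - 2*γ (t+1)) ≠ 0 := by linarith
  have hdd : dd γ t = -((r γ t)^2 * (1 - 2*γ (t+1))/4) := by
    have := neg_dd_eq γ t; linarith
  rw [hdd, r_succ]
  unfold csq
  rw [div_mul_eq_mul_div, eq_div_iff (pow_ne_zero 2 h3)]
  ring

lemma chain (hγ : Hγ γ) (hμconv : Hconv γ μ) (hint : Hint μ) (hpos : Hpos μ) (hQ : HQ μ Q)
    (h6 : γ (t+1) ≤ 1/6) :
    ∀ k, psi γ t * (-(dd γ t)) ≤ phi γ μ Q t k ∧ phi γ μ Q t k ≤ -(dd γ t) := by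
  obtain ⟨hp2, hp1, hpc⟩ := psi_facts γ hγ h6
  obtain ⟨hc0, hc4⟩ := csq_facts γ hγ h6
  have hdd := neg_dd_pos γ hγ t
  intro k
  induction k with
  | zero =>
    rw [phi_zero γ μ Q hγ hμconv hint hpos hQ t]
    constructor
    · nlinarith
    · exact le_rfl
  | succ k ih =>
    obtain ⟨ihl, ihr⟩ := ih
    have hphik : 0 < phi γ μ Q t k := phi_pos γ μ Q hpos hQ t k
    have hapos := aa_pos γ μ hpos t k
    have hale := aa_le γ μ Q hγ hμconv hint hpos hQ t k
    rw [phi_rec γ μ Q hγ hμconv hint hpos hQ t k]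
    have hpsipos : 0 < psi γ t := by linarith
    constructor
    · have hub : aa γ μ t (k+1) / phi γ μ Q t k
          ≤ (csq γ t * (dd γ t)^2) / (psi γ t * (-(dd γ t))) := by
        apply div_le_div₀ (by nlinarith) (by rw [← rdd_eq γ hγ t]; exact hale)
          (by positivity) ihl
      have heq : (csq γ t * (dd γ t)^2) / (psi γ t * (-(dd γ t)))
          = (1 - psi γ t) * (-(dd γ t)) := by
        rw [← hpc]
        have h1 : dd γ t ≠ 0 := by linarith
        field_simp
      rw [heq] at hub
      nlinarith
    · have : 0 < aa γ μ t (k+1) / phi γ μ Q t k := div_pos hapos hphik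
      linarith

end Phi

section Assemble

variable (μ : MeasureTheory.Measure ℝ) (Q : ℕ → Polynomial ℝ)

lemma Q_zero (hint : Hint μ) (hpos : Hpos μ) (hQ : HQ μ Q) : Q 0 = 1 :=
  (Qeq μ Q hint hpos hQ 0 1 monic_one natDegree_one
    (fun p hp => absurd hp (Nat.not_lt_zero _))).symm

lemma Iu_one [MeasureTheory.IsProbabilityMeasure μ] : Iu μ 1 = 1 := by
  unfold Iu
  simp

lemma In_zero [MeasureTheory.IsProbabilityMeasure μ] (hint : Hint μ) (hpos : Hpos μ)
    (hQ : HQ μ Q) : In μ Q 0 = 1 := by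
  rw [In_eq_Iu, Q_zero μ Q hint hpos hQ, mul_one, Iu_one]

lemma uu_zero_val [MeasureTheory.IsProbabilityMeasure μ] (hγ : Hγ γ) (hμconv : Hconv γ μ)
    (hint : Hint μ) (hpos : Hpos μ) (hQ : HQ μ Q) (t : ℕ) : uu γ μ t 0 = 1 := by
  rw [uu_eq_In γ μ Q hγ hμconv hint hpos hQ t 0, mul_zero, In_zero μ Q hint hpos hQ]

lemma cc_zero_dd : cc γ μ t 0 = dd γ t := by
  unfold cc
  rw [rho_zero_one, rho_one_dd]
  simp

lemma In_2t [MeasureTheory.IsProbabilityMeasure μ] (hγ : Hγ γ) (hμconv : Hconv γ μ)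
    (hint : Hint μ) (hpos : Hpos μ) (hQ : HQ μ Q) (t : ℕ) :
    In μ Q (2^t) = -(dd γ t) := by
  have h := (rho_vv γ μ Q hγ hμconv hint hpos hQ t 0).2
  have e : vv μ Q t 0 = In μ Q (2^t) := by
    unfold vv
    norm_num
  rw [e, cc_zero_dd, uu_zero_val γ μ Q hγ hμconv hint hpos hQ t] at h
  simpa using h

lemma vv_phi_uu (hpos : Hpos μ) (t k : ℕ) :
    vv μ Q t k = phi γ μ Q t k * uu γ μ t k := by
  unfold phi
  rw [div_mul_cancel₀ _ (uu_pos γ μ hpos t k).ne']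

lemma uu_succ_aa (hpos : Hpos μ) (t j : ℕ) :
    uu γ μ t (j+1) = aa γ μ t (j+1) * uu γ μ t j := by
  unfold aa
  simp only [Nat.add_sub_cancel]
  rw [div_mul_cancel₀ _ (uu_pos γ μ hpos t j).ne']

lemma Abound [MeasureTheory.IsProbabilityMeasure μ] (hγ : Hγ γ) (hμconv : Hconv γ μ)
    (hint : Hint μ) (hpos : Hpos μ) (hQ : HQ μ Q) (h6 : γ (t+2) ≤ 1/6) (m : ℕ) :
    In μ Q (2^(t+1)*(m+1)) ≤ (-(dd γ (t+1))) * In μ Q (2^(t+1)*m) := by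
  have hch := chain γ μ Q hγ hμconv hint hpos hQ (t := t+1) h6
  have hdd' := neg_dd_pos γ hγ (t+1)
  rcases Nat.even_or_odd m with ⟨j, hj⟩ | ⟨j, hj⟩
  · -- m = j + j
    have hm : m = 2*j := by omega
    subst hm
    have e1 : In μ Q (2^(t+1)*(2*j+1)) = vv μ Q (t+1) j := rfl
    have e2 : In μ Q (2^(t+1)*(2*j)) = uu γ μ (t+1) j := by
      rw [uu_eq_In γ μ Q hγ hμconv hint hpos hQ (t+1) j]
      congr 1
      rw [pow_succ]
      ring
    rw [e1, e2, vv_phi_uu γ μ Q hpos (t+1) j]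
    have := (hch j).2
    have hu := (uu_pos γ μ hpos (t+1) j).le
    nlinarith
  · -- m = 2j+1
    have hm : m = 2*j+1 := hj
    subst hm
    have e1 : In μ Q (2^(t+1)*(2*j+1+1)) = uu γ μ (t+1) (j+1) := by
      rw [uu_eq_In γ μ Q hγ hμconv hint hpos hQ (t+1) (j+1)]
      congr 1
      rw [pow_succ]
      ring
    have e2 : In μ Q (2^(t+1)*(2*j+1)) = vv μ Q (t+1) j := rfl
    rw [e1, e2, vv_phi_uu γ μ Q hpos (t+1) j, uu_succ_aa γ μ hpos (t+1) j]
    have hu := (uu_pos γ μ hpos (t+1) j).le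
    have hkey : aa γ μ (t+1) (j+1) ≤ (-(dd γ (t+1))) * phi γ μ Q (t+1) j := by
      have h1 := aa_le γ μ Q hγ hμconv hint hpos hQ (t+1) j
      rw [rdd_eq γ hγ (t+1)] at h1
      obtain ⟨hc0, hc4⟩ := csq_facts γ (t := t+1) hγ h6
      obtain ⟨hp2, hp1, hpc⟩ := psi_facts γ (t := t+1) hγ h6
      have h2 := (hch j).1
      nlinarith [sq_nonneg (dd γ (t+1))]
    nlinarith

lemma jacobi_sq (hpos : Hpos μ) (hQ : HQ μ Q) (n : ℕ) :
    (jacobiA μ Q (n+1))^2 = In μ Q (n+1) / In μ Q n := by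
  have h1 := (In_pos μ Q hpos hQ (n+1)).le
  have h2 := (In_pos μ Q hpos hQ n).le
  show (Real.sqrt (∫ x, ((Q (n + 1)).eval x) ^ 2 ∂μ) /
      Real.sqrt (∫ x, ((Q n).eval x) ^ 2 ∂μ))^2 = _
  rw [div_pow, Real.sq_sqrt (show (0:ℝ) ≤ ∫ x, ((Q (n+1)).eval x)^2 ∂μ from h1),
    Real.sq_sqrt (show (0:ℝ) ≤ ∫ x, ((Q n).eval x)^2 ∂μ from h2)]
  rfl

lemma prod_tel (hpos : Hpos μ) (hQ : HQ μ Q) (m : ℕ) :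
    ∀ n, m ≤ n → ∏ j ∈ Finset.Icc (m+1) n, (jacobiA μ Q j)^2 = In μ Q n / In μ Q m := by
  intro n hn
  induction n, hn using Nat.le_induction with
  | base =>
    rw [Finset.Icc_eq_empty (by omega), Finset.prod_empty,
      div_self (In_pos μ Q hpos hQ m).ne']
  | succ n hn ihn =>
    rw [Finset.prod_Icc_succ_top (by omega), ihn, jacobi_sq μ Q hpos hQ n]
    have h1 := (In_pos μ Q hpos hQ n).ne'
    have h2 := (In_pos μ Q hpos hQ m).ne'
    field_simp

end Assemble

end AG


theorem stmt_16 (γ : ℕ → ℝ) (hγ : ∀ s : ℕ, 0 < γ (s + 1) ∧ γ (s + 1) < 1 / 4)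
    (μ : Measure ℝ) [IsProbabilityMeasure μ]
    (hμint : ∀ p : Polynomial ℝ, Integrable (fun x => p.eval x) μ)
    (hμpos : ∀ p : Polynomial ℝ, p ≠ 0 → 0 < ∫ x, (p.eval x) ^ 2 ∂μ)
    (hμconv : ∀ p : Polynomial ℝ,
      Tendsto (fun s => nuInt γ s (fun x => p.eval x)) atTop (nhds (∫ x, p.eval x ∂μ)))
    (Q : ℕ → Polynomial ℝ) (hQmonic : ∀ n, (Q n).Monic) (hQdeg : ∀ n, (Q n).natDegree = n)
    (hQorth : ∀ n : ℕ, ∀ p : Polynomial ℝ, p.degree < (n : WithBot ℕ) →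
      ∫ x, (Q n).eval x * p.eval x ∂μ = 0)
    (hγ6 : ∀ s : ℕ, γ (s + 1) ≤ 1 / 6) (s : ℕ) :
    ∀ k : ℕ,
      ((1 / 2) * ∫ x, ((Q (2 ^ s)).eval x) ^ 2 ∂μ ≤
          (2 / (1 + Real.sqrt (1 - 4 * (4 * γ (s + 1) ^ 2 / (1 - 2 * γ (s + 1)) ^ 2))))⁻¹ *
            ∫ x, ((Q (2 ^ s)).eval x) ^ 2 ∂μ ∧
        (2 / (1 + Real.sqrt (1 - 4 * (4 * γ (s + 1) ^ 2 / (1 - 2 * γ (s + 1)) ^ 2))))⁻¹ *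
            (∫ x, ((Q (2 ^ s)).eval x) ^ 2 ∂μ) ≤
          ∏ j ∈ Finset.Icc (2 ^ s * (2 * k + 1) - 2 ^ s + 1) (2 ^ s * (2 * k + 1)),
            (jacobiA μ Q j) ^ 2 ∧
        ∏ j ∈ Finset.Icc (2 ^ s * (2 * k + 1) - 2 ^ s + 1) (2 ^ s * (2 * k + 1)),
            (jacobiA μ Q j) ^ 2 ≤
          ∫ x, ((Q (2 ^ s)).eval x) ^ 2 ∂μ) ∧
      (∏ j ∈ Finset.Icc (2 ^ s * (2 * k + 2) - 2 ^ s + 1) (2 ^ s * (2 * k + 2)),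
            (jacobiA μ Q j) ^ 2 ≤
          (2 / (1 + Real.sqrt (1 - 4 * (4 * γ (s + 1) ^ 2 / (1 - 2 * γ (s + 1)) ^ 2)))) *
            ((∫ x, ((Q (2 ^ (s + 1))).eval x) ^ 2 ∂μ) / ∫ x, ((Q (2 ^ s)).eval x) ^ 2 ∂μ) ∧
        (2 / (1 + Real.sqrt (1 - 4 * (4 * γ (s + 1) ^ 2 / (1 - 2 * γ (s + 1)) ^ 2)))) *
            ((∫ x, ((Q (2 ^ (s + 1))).eval x) ^ 2 ∂μ) / ∫ x, ((Q (2 ^ s)).eval x) ^ 2 ∂μ) ≤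
          2 * ((∫ x, ((Q (2 ^ (s + 1))).eval x) ^ 2 ∂μ) / ∫ x, ((Q (2 ^ s)).eval x) ^ 2 ∂μ)) := by
  intro k
  have hγ' : Hγ γ := hγ
  have hconv : Hconv γ μ := hμconv
  have hint : Hint μ := hμint
  have hpos : Hpos μ := hμpos
  have hQp : HQ μ Q := ⟨hQmonic, hQdeg, hQorth⟩
  obtain ⟨hp2, hp1, hpc⟩ := psi_facts γ (t := s) hγ' (hγ6 s)
  have hψpos : (0:ℝ) < psi γ s := by linarith
  have hdds := neg_dd_pos γ hγ' s
  have hdds1 := neg_dd_pos γ hγ' (s+1)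
  have hIs : (∫ x, ((Q (2 ^ s)).eval x) ^ 2 ∂μ) = In μ Q (2^s) := rfl
  have hIs1 : (∫ x, ((Q (2 ^ (s+1))).eval x) ^ 2 ∂μ) = In μ Q (2^(s+1)) := rfl
  have hIsv : In μ Q (2^s) = -(dd γ s) := In_2t γ μ Q hγ' hconv hint hpos hQp s
  have hIs1v : In μ Q (2^(s+1)) = -(dd γ (s+1)) := In_2t γ μ Q hγ' hconv hint hpos hQp (s+1)
  have hCinv : (2 / (1 + Real.sqrt (1 - 4 * (4 * γ (s + 1) ^ 2 / (1 - 2 * γ (s + 1)) ^ 2))))⁻¹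
      = psi γ s := by
    rw [inv_div]
    rfl
  have hCst : (2 / (1 + Real.sqrt (1 - 4 * (4 * γ (s + 1) ^ 2 / (1 - 2 * γ (s + 1)) ^ 2))))
      = 1 / psi γ s := by
    rw [show psi γ s = (1 + Real.sqrt (1 - 4 * (4 * γ (s + 1) ^ 2 /
      (1 - 2 * γ (s + 1)) ^ 2)))/2 from rfl, one_div_div]
  have hch := chain γ μ Q hγ' hconv hint hpos hQp (t := s) (hγ6 s) k
  have h2spos : 0 < 2^s := pow_pos (by norm_num) s
  have hepow : 2^s*(2*k+1) = 2^(s+1)*k + 2^s := by rw [pow_succ]; ring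
  have huuk : In μ Q (2^(s+1)*k) = uu γ μ s k :=
    (uu_eq_In γ μ Q hγ' hconv hint hpos hQp s k).symm
  have hupos := uu_pos γ μ hpos s k
  have hprodA : ∏ j ∈ Finset.Icc (2 ^ s * (2 * k + 1) - 2 ^ s + 1) (2 ^ s * (2 * k + 1)),
      (jacobiA μ Q j) ^ 2 = phi γ μ Q s k := by
    rw [show 2 ^ s * (2 * k + 1) - 2 ^ s + 1 = 2^(s+1)*k + 1 from by omega,
      prod_tel μ Q hpos hQp (2^(s+1)*k) (2 ^ s * (2 * k + 1)) (by omega), huuk]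
    rfl
  have hphiv : vv μ Q s k = phi γ μ Q s k * uu γ μ s k := vv_phi_uu γ μ Q hpos s k
  refine ⟨⟨?_, ?_, ?_⟩, ?_, ?_⟩
  · rw [hCinv, hIs, hIsv]
    nlinarith
  · rw [hCinv, hIs, hIsv, hprodA]
    exact hch.1
  · rw [hIs, hIsv, hprodA]
    exact hch.2
  · -- part b, first inequality
    have hepow2 : 2^s*(2*k+2) = 2^s*(2*k+1) + 2^s := by ring
    have he21 : 2^s*(2*k+2) = 2^(s+1)*(k+1) := by rw [pow_succ]; ring
    have hprodB : ∏ j ∈ Finset.Icc (2 ^ s * (2 * k + 2) - 2 ^ s + 1) (2 ^ s * (2 * k + 2)),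
        (jacobiA μ Q j) ^ 2 = In μ Q (2^(s+1)*(k+1)) / vv μ Q s k := by
      rw [show 2 ^ s * (2 * k + 2) - 2 ^ s + 1 = 2^s*(2*k+1) + 1 from by omega,
        prod_tel μ Q hpos hQp (2^s*(2*k+1)) (2 ^ s * (2 * k + 2)) (by omega), he21]
      rfl
    have hAb := Abound γ μ Q (t := s) hγ' hconv hint hpos hQp (hγ6 (s+1)) k
    rw [huuk] at hAb
    have hvlow : psi γ s * (-(dd γ s)) * uu γ μ s k ≤ vv μ Q s k := by
      rw [hphiv]
      nlinarith [hch.1]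
    have hvpos : 0 < vv μ Q s k := In_pos μ Q hpos hQp _
    have h1 : In μ Q (2^(s+1)*(k+1)) / vv μ Q s k
        ≤ ((-(dd γ (s+1))) * uu γ μ s k) / (psi γ s * (-(dd γ s)) * uu γ μ s k) := by
      apply div_le_div₀ (by positivity) hAb (by positivity) hvlow
    have h2 : ((-(dd γ (s+1))) * uu γ μ s k) / (psi γ s * (-(dd γ s)) * uu γ μ s k)
        = (1 / psi γ s) * ((-(dd γ (s+1))) / (-(dd γ s))) := by
      rw [mul_div_mul_right _ _ hupos.ne', div_mul_div_comm, one_mul]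
    rw [hprodB, hCst, hIs, hIs1, hIsv, hIs1v]
    rw [h2] at h1
    exact h1
  · -- part b, second inequality
    rw [hCst, hIs, hIs1, hIsv, hIs1v]
    have hx : (0:ℝ) ≤ (-(dd γ (s+1))) / (-(dd γ s)) := by positivity
    have hc2 : 1 / psi γ s ≤ 2 := by
      rw [div_le_iff₀ hψpos]
      linarith
    nlinarith
end

section
/- Suppose γ_s ≤ 1/6 for all s. Then the Widom factors satisfy: (a) liminf_{s→∞} W_{2^s} = liminf_{n→∞} W_n (indeed min{W_n : 2^s ≤ n < 2^{s+1}} = W_{2^s} for every s); and (b) limsup_{n→∞} W_n = ∞. -/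
open Polynomial MeasureTheory Filter

/-- The Widom factors `W_n = ‖Q_n‖ / C^n`, where `‖f‖ = (∫ f² dμ)^{1/2}` and
`C = exp(Σ_{k=1}^∞ 2^{-k} log γ_k)` is the logarithmic capacity of `K(γ)`. -/
noncomputable def widomW (γ : ℕ → ℝ) (μ : MeasureTheory.Measure ℝ)
    (Q : ℕ → Polynomial ℝ) (n : ℕ) : ℝ :=
  Real.sqrt (∫ x, ((Q n).eval x) ^ 2 ∂μ) /
    (Real.exp (∑' k : ℕ, (1 / 2 : ℝ) ^ (k + 1) * Real.log (γ (k + 1)))) ^ n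

namespace W19

def shift (γ : ℕ → ℝ) : ℕ → ℝ := fun k => γ (k + 1)

/-- Admissibility of the parameter sequence. -/
def Adm (γ : ℕ → ℝ) : Prop := ∀ s : ℕ, 0 < γ (s + 1) ∧ γ (s + 1) ≤ 1 / 6

lemma Adm.shift {γ : ℕ → ℝ} (h : Adm γ) : Adm (W19.shift γ) := fun s => h (s + 1)

lemma Adm.pos {γ : ℕ → ℝ} (h : Adm γ) (s : ℕ) : 0 < γ (s + 1) := (h s).1
lemma Adm.le6 {γ : ℕ → ℝ} (h : Adm γ) (s : ℕ) : γ (s + 1) ≤ 1 / 6 := (h s).2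
lemma Adm.ne0 {γ : ℕ → ℝ} (h : Adm γ) (s : ℕ) : γ (s + 1) ≠ 0 := ne_of_gt (h s).1

/-- the quadratic `F(x) = 1 + (x² - x)/γ₁` as a polynomial. -/
noncomputable def Fp (γ : ℕ → ℝ) : Polynomial ℝ := C (γ 1)⁻¹ * (X ^ 2 - X) + 1

noncomputable def Fm (γ : ℕ → ℝ) : ℝ → ℝ := fun x => (Fp γ).eval x

lemma Fm_eval {γ : ℕ → ℝ} (x : ℝ) : Fm γ x = (γ 1)⁻¹ * (x ^ 2 - x) + 1 := by
  simp [Fm, Fp]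

lemma r_pos {γ : ℕ → ℝ} (h : Adm γ) : ∀ s, 0 < r γ s
  | 0 => one_pos
  | s + 1 => by
      have := r_pos h s
      have := h.pos s
      simp only [r]; positivity

lemma r_shift {γ : ℕ → ℝ} (s : ℕ) :
    (γ 1) ^ (2 ^ s) * r (shift γ) s = r γ (s + 1) := by
  induction s with
  | zero => simp [r, shift]
  | succ s ih =>
      have : r γ (s + 2) = γ (s + 2) * (r γ (s + 1)) ^ 2 := rfl
      rw [this, ← ih]
      have : r (shift γ) (s + 1) = γ (s + 2) * (r (shift γ) s) ^ 2 := rfl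
      rw [this]
      ring

lemma P_one {γ : ℕ → ℝ} : P γ 1 = X ^ 2 - X := by
  show P γ 0 * (P γ 0 + C (r γ 0)) = X ^ 2 - X
  have : r γ 0 = 1 := rfl
  rw [this]
  show ((X : Polynomial ℝ) - 1) * ((X - 1) + C 1) = X ^ 2 - X
  rw [Polynomial.C_1]; ring

lemma P_succ {γ : ℕ → ℝ} (h : Adm γ) (s : ℕ) :
    P γ (s + 1) = C ((γ 1) ^ (2 ^ s)) * ((P (shift γ) s).comp (Fp γ)) := by
  induction s with
  | zero =>
      have h1 : (P (shift γ) 0).comp (Fp γ) = Fp γ - 1 := by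
        show ((X : Polynomial ℝ) - 1).comp (Fp γ) = Fp γ - 1
        simp
      rw [h1, P_one]
      have h2 : Fp γ - 1 = C (γ 1)⁻¹ * (X ^ 2 - X) := by simp [Fp]
      rw [h2, ← mul_assoc, ← Polynomial.C_mul]
      have h3 : (γ 1 : ℝ) ^ 2 ^ 0 * (γ 1)⁻¹ = 1 := by
        rw [pow_zero, pow_one, mul_inv_cancel₀ (h.ne0 0)]
      rw [h3]
      simp
  | succ s ih =>
      have key : (P (shift γ) s).comp (Fp γ) = C ((γ 1) ^ (2 ^ s))⁻¹ * P γ (s + 1) := by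
        rw [ih, ← mul_assoc, ← Polynomial.C_mul,
          inv_mul_cancel₀ (pow_ne_zero _ (h.ne0 0))]
        simp
      show P γ (s + 1) * (P γ (s + 1) + C (r γ (s + 1)))
          = C ((γ 1) ^ (2 ^ (s + 1))) *
            ((P (shift γ) s * (P (shift γ) s + C (r (shift γ) s))).comp (Fp γ))
      rw [Polynomial.mul_comp, Polynomial.add_comp, Polynomial.C_comp, key]
      have hr : (C (r (shift γ) s) : Polynomial ℝ)
          = C ((γ 1) ^ (2 ^ s))⁻¹ * C (r γ (s + 1)) := by
        rw [← Polynomial.C_mul]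
        congr 1
        rw [inv_mul_eq_div, eq_div_iff (pow_ne_zero _ (h.ne0 0)), mul_comm]
        exact (r_shift s)
      rw [hr]
      have hpow : ((γ 1) ^ (2 ^ (s + 1))) = ((γ 1) ^ (2 ^ s)) * ((γ 1) ^ (2 ^ s)) := by
        rw [← pow_add]; congr 1; rw [pow_succ]; ring
      rw [hpow, Polynomial.C_mul]
      have hC : (C ((γ 1) ^ (2 ^ s)) : Polynomial ℝ) * C ((γ 1) ^ (2 ^ s))⁻¹ = 1 := by
        rw [← Polynomial.C_mul, mul_inv_cancel₀ (pow_ne_zero _ (h.ne0 0))]; simp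
      have hmain : C ((γ 1) ^ (2 ^ s)) * C ((γ 1) ^ (2 ^ s)) *
            (C ((γ 1) ^ (2 ^ s))⁻¹ * P γ (s + 1) *
             (C ((γ 1) ^ (2 ^ s))⁻¹ * P γ (s + 1) + C ((γ 1) ^ (2 ^ s))⁻¹ * C (r γ (s + 1))))
          = (C ((γ 1) ^ (2 ^ s)) * C ((γ 1) ^ (2 ^ s))⁻¹) *
            ((C ((γ 1) ^ (2 ^ s)) * C ((γ 1) ^ (2 ^ s))⁻¹) *
              (P γ (s + 1) * (P γ (s + 1) + C (r γ (s + 1))))) := by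
        ring
      rw [hmain, hC, one_mul, one_mul]

/-- `P γ s + r_s/2` factors into linear factors with roots in `[0,1]`. -/
def Good (γ : ℕ → ℝ) (s : ℕ) : Prop :=
  ∃ m : Multiset ℝ, Multiset.card m = 2 ^ s ∧ (∀ y ∈ m, y ∈ Set.Icc (0:ℝ) 1) ∧
    P γ s + C (r γ s / 2) = (m.map fun a => X - C a).prod

noncomputable def xp (γ : ℕ → ℝ) (y : ℝ) : ℝ := (1 + Real.sqrt (1 - 4 * γ 1 * (1 - y))) / 2
noncomputable def xm (γ : ℕ → ℝ) (y : ℝ) : ℝ := (1 - Real.sqrt (1 - 4 * γ 1 * (1 - y))) / 2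

lemma xpm {γ : ℕ → ℝ} (h : Adm γ) {y : ℝ} (hy : y ∈ Set.Icc (0:ℝ) 1) :
    xp γ y + xm γ y = 1 ∧ xp γ y * xm γ y = γ 1 * (1 - y) ∧
    xp γ y ∈ Set.Icc (0:ℝ) 1 ∧ xm γ y ∈ Set.Icc (0:ℝ) 1 ∧
    Fm γ (xp γ y) = y ∧ Fm γ (xm γ y) = y := by
  obtain ⟨hy0, hy1⟩ := hy
  have hg0 := h.pos 0
  have hg6 := h.le6 0
  have hd0 : (0:ℝ) ≤ 1 - 4 * γ 1 * (1 - y) := by nlinarith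
  have hd1 : 1 - 4 * γ 1 * (1 - y) ≤ 1 := by nlinarith
  have hs0 : 0 ≤ Real.sqrt (1 - 4 * γ 1 * (1 - y)) := Real.sqrt_nonneg _
  have hs1 : Real.sqrt (1 - 4 * γ 1 * (1 - y)) ≤ 1 := Real.sqrt_le_one.mpr hd1
  have hsq : (Real.sqrt (1 - 4 * γ 1 * (1 - y))) ^ 2 = 1 - 4 * γ 1 * (1 - y) :=
    Real.sq_sqrt hd0
  have h1 : xp γ y + xm γ y = 1 := by unfold xp xm; ring
  have h2 : xp γ y * xm γ y = γ 1 * (1 - y) := by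
    unfold xp xm
    have : (1 + Real.sqrt (1 - 4 * γ 1 * (1 - y))) / 2 *
        ((1 - Real.sqrt (1 - 4 * γ 1 * (1 - y))) / 2)
        = (1 - (Real.sqrt (1 - 4 * γ 1 * (1 - y))) ^ 2) / 4 := by ring
    rw [this, hsq]; ring
  refine ⟨h1, h2, ⟨by unfold xp; linarith, by unfold xp; linarith⟩,
    ⟨by unfold xm; linarith, by unfold xm; linarith⟩, ?_, ?_⟩
  · rw [Fm_eval]
    have hx : xp γ y ^ 2 - xp γ y = -(xp γ y * xm γ y) := by nlinarith [h1]
    rw [hx, h2]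
    field_simp
    ring
  · rw [Fm_eval]
    have hx : xm γ y ^ 2 - xm γ y = -(xp γ y * xm γ y) := by nlinarith [h1]
    rw [hx, h2]
    field_simp
    ring

lemma quad_factor {γ : ℕ → ℝ} (h : Adm γ) {y : ℝ} (hy : y ∈ Set.Icc (0:ℝ) 1) :
    Fp γ - C y = C (γ 1)⁻¹ * ((X - C (xp γ y)) * (X - C (xm γ y))) := by
  obtain ⟨h1, h2, _, _, _, _⟩ := xpm h hy
  have expand : ((X : Polynomial ℝ) - C (xp γ y)) * (X - C (xm γ y))
      = X ^ 2 - C (xp γ y + xm γ y) * X + C (xp γ y * xm γ y) := by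
    rw [Polynomial.C_add, Polynomial.C_mul]; ring
  rw [expand, h1, h2]
  unfold Fp
  have hC1 : (C (γ 1)⁻¹ : Polynomial ℝ) * C (γ 1 * (1 - y)) = C (1 - y) := by
    rw [← Polynomial.C_mul, inv_mul_cancel_left₀ (h.ne0 0)]
  have : (C (γ 1)⁻¹ : Polynomial ℝ) * (X ^ 2 - C 1 * X + C (γ 1 * (1 - y)))
      = C (γ 1)⁻¹ * (X ^ 2 - C 1 * X) + C (γ 1)⁻¹ * C (γ 1 * (1 - y)) := by ring
  rw [this, hC1]
  simp only [Polynomial.C_1, Polynomial.C_sub]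
  ring

lemma good_step {γ : ℕ → ℝ} (h : Adm γ) {s : ℕ} {m' : Multiset ℝ}
    (hcard : Multiset.card m' = 2 ^ s) (hmem : ∀ y ∈ m', y ∈ Set.Icc (0:ℝ) 1)
    (hprod : P (shift γ) s + C (r (shift γ) s / 2) = (m'.map fun a => X - C a).prod) :
    P γ (s + 1) + C (r γ (s + 1) / 2)
      = ((m'.bind fun y => ({xp γ y, xm γ y} : Multiset ℝ)).map fun a => X - C a).prod := by
  have hP := P_succ h s
  have hCr : (C (r γ (s + 1) / 2) : Polynomial ℝ)
      = C ((γ 1) ^ (2 ^ s)) * C (r (shift γ) s / 2) := by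
    rw [← Polynomial.C_mul]
    congr 1
    rw [← r_shift s]; ring
  rw [hP, hCr, ← mul_add]
  have hcomp : (P (shift γ) s).comp (Fp γ) + C (r (shift γ) s / 2)
      = (P (shift γ) s + C (r (shift γ) s / 2)).comp (Fp γ) := by
    simp [Polynomial.add_comp]
  rw [hcomp, hprod, Polynomial.multiset_prod_comp]
  have hmap : Multiset.map (fun p => Polynomial.comp p (Fp γ))
        (Multiset.map (fun a => X - C a) m')
      = Multiset.map (fun y => C (γ 1)⁻¹ *
          ((X - C (xp γ y)) * (X - C (xm γ y)))) m' := by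
    rw [Multiset.map_map]
    apply Multiset.map_congr rfl
    intro y hy
    show ((X : Polynomial ℝ) - C y).comp (Fp γ) = _
    rw [Polynomial.sub_comp, Polynomial.X_comp, Polynomial.C_comp]
    exact quad_factor h (hmem y hy)
  rw [hmap]
  rw [show (Multiset.map (fun y => C (γ 1)⁻¹ *
          ((X - C (xp γ y)) * (X - C (xm γ y)))) m').prod
      = (Multiset.map (fun _ => (C (γ 1)⁻¹ : Polynomial ℝ)) m').prod *
        (Multiset.map (fun y => ((X - C (xp γ y)) * (X - C (xm γ y)))) m').prod
    from Multiset.prod_map_mul]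
  rw [Multiset.map_const', Multiset.prod_replicate, hcard]
  have hCpow : (C (γ 1)⁻¹ : Polynomial ℝ) ^ (2 ^ s) = C (((γ 1) ^ (2 ^ s))⁻¹) := by
    rw [← Polynomial.C_pow, inv_pow]
  rw [hCpow, ← mul_assoc, ← Polynomial.C_mul,
    mul_inv_cancel₀ (pow_ne_zero _ (h.ne0 0)), Polynomial.C_1, one_mul]
  rw [Multiset.map_bind, Multiset.prod_bind]
  congr 1
  apply Multiset.map_congr rfl
  intro y _
  show (X - C (xp γ y)) * (X - C (xm γ y)) = _
  simp [Multiset.insert_eq_cons]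


lemma good {γ : ℕ → ℝ} (h : Adm γ) : ∀ s, Good γ s := by
  intro s
  induction s generalizing γ with
  | zero =>
      refine ⟨{(1:ℝ)/2}, by simp, by intro y hy; simp at hy; subst hy; norm_num, ?_⟩
      have : r γ 0 = 1 := rfl
      rw [this]
      show (X : Polynomial ℝ) - 1 + C (1 / 2) = _
      simp only [Multiset.map_singleton, Multiset.prod_singleton]
      rw [show ((1:Polynomial ℝ)) = C 1 from rfl, sub_add, ← Polynomial.C_sub]
      norm_num
  | succ s ih =>
      obtain ⟨m', hcard, hmem, hprod⟩ := ih (h.shift)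
      refine ⟨m'.bind fun y => {xp γ y, xm γ y}, ?_, ?_, good_step h hcard hmem hprod⟩
      · rw [Multiset.card_bind]
        have : Multiset.map (Multiset.card ∘ fun y => ({xp γ y, xm γ y} : Multiset ℝ)) m'
            = Multiset.map (fun _ => (2:ℕ)) m' := by
          apply Multiset.map_congr rfl
          intro y _; rfl
        rw [this, Multiset.map_const', Multiset.sum_replicate, hcard]
        simp [pow_succ, mul_comm]
      · intro x hx
        rw [Multiset.mem_bind] at hx
        obtain ⟨y, hy, hxy⟩ := hx
        obtain ⟨_, _, hxp, hxm, _, _⟩ := xpm h (hmem y hy)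
        simp only [Multiset.insert_eq_cons, Multiset.mem_cons, Multiset.mem_singleton] at hxy
        rcases hxy with rfl | rfl
        · exact hxp
        · exact hxm

lemma roots_eq {γ : ℕ → ℝ} {s : ℕ} {m : Multiset ℝ}
    (hprod : P γ s + C (r γ s / 2) = (m.map fun a => X - C a).prod) :
    (P γ s + C (r γ s / 2)).roots = m := by
  rw [hprod, Polynomial.roots_multiset_prod_X_sub_C]

lemma nuInt_nonneg {γ : ℕ → ℝ} (h : Adm γ) (s : ℕ) {f : ℝ → ℝ}
    (hf : ∀ x ∈ Set.Icc (0:ℝ) 1, 0 ≤ f x) : 0 ≤ nuInt γ s f := by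
  obtain ⟨m, _, hmem, hprod⟩ := good h s
  unfold nuInt
  rw [roots_eq hprod]
  apply div_nonneg _ (by positivity)
  apply Multiset.sum_nonneg
  intro a ha
  rw [Multiset.mem_map] at ha
  obtain ⟨y, hy, rfl⟩ := ha
  exact hf y (hmem y hy)

lemma nuInt_pair_sum {γ : ℕ → ℝ} (h : Adm γ) (s : ℕ) (f : ℝ → ℝ) :
    ∃ m' : Multiset ℝ, Multiset.card m' = 2 ^ s ∧ (∀ y ∈ m', y ∈ Set.Icc (0:ℝ) 1) ∧
      (P (shift γ) s + C (r (shift γ) s / 2)).roots = m' ∧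
      nuInt γ (s + 1) f = (m'.map fun y => f (xp γ y) + f (xm γ y)).sum / 2 ^ (s + 1) := by
  obtain ⟨m', hcard, hmem, hprod⟩ := good h.shift s
  refine ⟨m', hcard, hmem, roots_eq hprod, ?_⟩
  unfold nuInt
  rw [roots_eq (good_step h hcard hmem hprod), Multiset.map_bind, Multiset.sum_bind]
  congr 2
  apply Multiset.map_congr rfl
  intro y _
  simp [Multiset.insert_eq_cons]

lemma nuInt_comp {γ : ℕ → ℝ} (h : Adm γ) (s : ℕ) (g : ℝ → ℝ) :
    nuInt γ (s + 1) (fun x => g (Fm γ x)) = nuInt (shift γ) s g := by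
  obtain ⟨m', hcard, hmem, hroots, heq⟩ := nuInt_pair_sum h s (fun x => g (Fm γ x))
  rw [heq]
  have hmap : (m'.map fun y => g (Fm γ (xp γ y)) + g (Fm γ (xm γ y))).sum
      = (m'.map fun y => 2 * g y).sum := by
    congr 1
    apply Multiset.map_congr rfl
    intro y hy
    obtain ⟨_, _, _, _, hfp, hfm⟩ := xpm h (hmem y hy)
    rw [hfp, hfm]; ring
  rw [hmap, Multiset.sum_map_mul_left]
  unfold nuInt
  rw [hroots]
  rw [pow_succ]
  field_simp

lemma nuInt_sym {γ : ℕ → ℝ} (h : Adm γ) (s : ℕ) (g : ℝ → ℝ) :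
    nuInt γ (s + 1) (fun x => (x - 1/2) * g (Fm γ x)) = 0 := by
  obtain ⟨m', hcard, hmem, hroots, heq⟩ := nuInt_pair_sum h s _
  rw [heq]
  have hmap : (m'.map fun y => (xp γ y - 1/2) * g (Fm γ (xp γ y))
      + (xm γ y - 1/2) * g (Fm γ (xm γ y))).sum = (m'.map fun _ => (0:ℝ)).sum := by
    congr 1
    apply Multiset.map_congr rfl
    intro y hy
    obtain ⟨hadd, _, _, _, hfp, hfm⟩ := xpm h (hmem y hy)
    rw [hfp, hfm]
    have h0 : xp γ y - 1/2 + (xm γ y - 1/2) = 0 := by linarith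
    linear_combination g y * h0
  rw [hmap]
  simp

/-- A bundled "system": parameter sequence and measure with all standing hypotheses. -/
structure Sys where
  γ : ℕ → ℝ
  μ : Measure ℝ
  adm : Adm γ
  hsum : Summable fun k : ℕ => (1/2 : ℝ) ^ (k + 1) * Real.log (1 / γ (k + 1))
  hprob : IsProbabilityMeasure μ
  hint : ∀ p : Polynomial ℝ, Integrable (fun x => p.eval x) μ
  hconv : ∀ p : Polynomial ℝ,
    Tendsto (fun s => nuInt γ s fun x => p.eval x) atTop (nhds (∫ x, p.eval x ∂μ))

lemma Fm_continuous (γ : ℕ → ℝ) : Continuous (Fm γ) := by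
  have := Polynomial.continuous (Fp γ)
  exact this

lemma comp_eval (γ : ℕ → ℝ) (q : Polynomial ℝ) (x : ℝ) :
    (q.comp (Fp γ)).eval x = q.eval (Fm γ x) := by
  rw [Polynomial.eval_comp]; rfl

/-- positivity of integrals of polynomials nonnegative on [0,1]. -/
lemma Sys.int_nonneg (S : Sys) (g : Polynomial ℝ)
    (hg : ∀ x ∈ Set.Icc (0:ℝ) 1, 0 ≤ g.eval x) : 0 ≤ ∫ x, g.eval x ∂S.μ :=
  ge_of_tendsto' (S.hconv g) fun s => nuInt_nonneg S.adm s hg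

/-- change of variables to the image measure. -/
lemma Sys.int_map (S : Sys) (q : Polynomial ℝ) :
    ∫ y, q.eval y ∂(Measure.map (Fm S.γ) S.μ) = ∫ x, (q.comp (Fp S.γ)).eval x ∂S.μ := by
  rw [MeasureTheory.integral_map ((Fm_continuous S.γ).measurable.aemeasurable)
    ((Polynomial.continuous q).aestronglyMeasurable)]
  congr 1
  funext x
  exact (comp_eval S.γ q x).symm

/-- the symmetry integral identity : `∫ (x-1/2)·g(F x) dμ = 0`. -/
lemma Sys.int_sym (S : Sys) (g : Polynomial ℝ) :
    ∫ x, (x - 1/2) * (g.comp (Fp S.γ)).eval x ∂S.μ = 0 := by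
  set p := (X - C (1/2 : ℝ)) * g.comp (Fp S.γ) with hp
  have hev : (fun x => p.eval x) = fun x => (x - 1/2) * (g.comp (Fp S.γ)).eval x := by
    funext x; simp [hp]
  have h1 : Tendsto (fun s => nuInt S.γ s fun x => p.eval x) atTop
      (nhds (∫ x, p.eval x ∂S.μ)) := S.hconv p
  have h2 : ∀ s : ℕ, nuInt S.γ (s + 1) (fun x => p.eval x) = 0 := by
    intro s
    have : (fun x => p.eval x) = fun x => (x - 1/2) * g.eval (Fm S.γ x) := by
      rw [hev]; funext x; rw [comp_eval]
    rw [this]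
    exact nuInt_sym S.adm s (fun t => eval t g)
  have h3 : Tendsto (fun s => nuInt S.γ s fun x => p.eval x) atTop (nhds 0) := by
    refine Tendsto.congr' ?_ tendsto_const_nhds
    filter_upwards [Filter.eventually_ge_atTop 1] with s hs
    obtain ⟨k, rfl⟩ := Nat.exists_eq_add_of_le hs
    rw [add_comm] at *
    exact (h2 k).symm
  have := tendsto_nhds_unique h1 h3
  calc ∫ x, (x - 1/2) * (g.comp (Fp S.γ)).eval x ∂S.μ
      = ∫ x, p.eval x ∂S.μ := by rw [hev]
    _ = 0 := this

/-- The shifted system. -/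
noncomputable def Sys.next (S : Sys) : Sys where
  γ := shift S.γ
  μ := Measure.map (Fm S.γ) S.μ
  adm := S.adm.shift
  hsum := by
    have h1 : Summable fun k : ℕ =>
        (1/2 : ℝ) ^ (k + 1 + 1) * Real.log (1 / S.γ (k + 1 + 1)) :=
      (summable_nat_add_iff 1).mpr S.hsum
    have h2 := h1.mul_left 2
    apply h2.congr
    intro k
    show 2 * ((1/2 : ℝ) ^ (k + 2) * Real.log (1 / S.γ (k + 2)))
        = (1/2 : ℝ) ^ (k + 1) * Real.log (1 / shift S.γ (k + 1))
    have : (shift S.γ) (k + 1) = S.γ (k + 2) := rfl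
    rw [this]
    ring
  hprob := by
    haveI := S.hprob
    exact Measure.isProbabilityMeasure_map ((Fm_continuous S.γ).measurable.aemeasurable)
  hint := by
    intro q
    rw [MeasureTheory.integrable_map_measure
      ((Polynomial.continuous q).aestronglyMeasurable)
      ((Fm_continuous S.γ).measurable.aemeasurable)]
    have : ((fun x => q.eval x) ∘ Fm S.γ) = fun x => (q.comp (Fp S.γ)).eval x := by
      funext x; rw [comp_eval]; rfl
    rw [this]
    exact S.hint _
  hconv := by
    intro q
    have h1 := (S.hconv (q.comp (Fp S.γ))).comp (tendsto_add_atTop_nat 1)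
    have h2 : ((fun s => nuInt S.γ s fun x => (q.comp (Fp S.γ)).eval x) ∘ fun a => a + 1)
        = fun s => nuInt (shift S.γ) s fun x => q.eval x := by
      funext s
      show nuInt S.γ (s + 1) (fun x => (q.comp (Fp S.γ)).eval x) = _
      have : (fun x => (q.comp (Fp S.γ)).eval x) = fun x => q.eval (Fm S.γ x) := by
        funext x; rw [comp_eval]
      rw [this]
      exact nuInt_comp S.adm s (fun t => eval t q)
    rw [h2] at h1
    rw [S.int_map q]
    exact h1

lemma Fp_natDegree {γ : ℕ → ℝ} (hne : γ 1 ≠ 0) : (Fp γ).natDegree = 2 := by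
  unfold Fp
  compute_degree!

lemma Fp_coeff_two {γ : ℕ → ℝ} : (Fp γ).coeff 2 = (γ 1)⁻¹ := by
  unfold Fp
  simp [Polynomial.coeff_one, Polynomial.coeff_X]

lemma Fp_leadingCoeff {γ : ℕ → ℝ} (hne : γ 1 ≠ 0) : (Fp γ).leadingCoeff = (γ 1)⁻¹ := by
  rw [Polynomial.leadingCoeff, Fp_natDegree hne, Fp_coeff_two]

lemma Fp_pow_natDegree {γ : ℕ → ℝ} (hne : γ 1 ≠ 0) (k : ℕ) :
    ((Fp γ) ^ k).natDegree = 2 * k := by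
  rw [Polynomial.natDegree_pow, Fp_natDegree hne]; ring

lemma Fp_pow_coeff {γ : ℕ → ℝ} (hne : γ 1 ≠ 0) (k : ℕ) :
    ((Fp γ) ^ k).coeff (2 * k) = ((γ 1)⁻¹) ^ k := by
  have h1 : ((Fp γ) ^ k).coeff (2 * k) = ((Fp γ) ^ k).leadingCoeff := by
    rw [Polynomial.leadingCoeff, Fp_pow_natDegree hne]
  rw [h1, Polynomial.leadingCoeff_pow, Fp_leadingCoeff hne]

lemma comp_natDegree_le {γ : ℕ → ℝ} (hne : γ 1 ≠ 0) (e : Polynomial ℝ) {k : ℕ}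
    (he : e.natDegree ≤ k) : (e.comp (Fp γ)).natDegree ≤ 2 * k := by
  rw [Polynomial.natDegree_comp, Fp_natDegree hne]
  omega

lemma dec {γ : ℕ → ℝ} (hne : γ 1 ≠ 0) :
    ∀ m : ℕ, ∀ p : Polynomial ℝ, p.natDegree ≤ 2 * m + 1 → ∃ e o : Polynomial ℝ,
      p = e.comp (Fp γ) + X * o.comp (Fp γ) ∧ e.natDegree ≤ m ∧ o.natDegree ≤ m ∧
      o.coeff m = (γ 1) ^ m * p.coeff (2 * m + 1) ∧
      (p.coeff (2 * m + 1) = 0 → e.coeff m = (γ 1) ^ m * p.coeff (2 * m)) := by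
  intro m
  induction m with
  | zero =>
      intro p hp
      simp only [Nat.mul_zero, Nat.zero_add] at hp
      refine ⟨C (p.coeff 0), C (p.coeff 1), ?_, by simp, by simp, by simp, by simp⟩
      conv_lhs => rw [Polynomial.eq_X_add_C_of_natDegree_le_one hp]
      rw [Polynomial.C_comp, Polynomial.C_comp]
      ring
  | succ m ih =>
      intro p hp
      set a := γ 1 with ha
      set c := p.coeff (2 * (m + 1) + 1) with hc
      set oo := C (a ^ (m + 1) * c) * X ^ (m + 1) with hoo
      have hoocomp : oo.comp (Fp γ) = C (a ^ (m + 1) * c) * (Fp γ) ^ (m + 1) := by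
        rw [hoo, Polynomial.mul_comp, Polynomial.C_comp, Polynomial.X_pow_comp]
      set q2 := p - X * oo.comp (Fp γ) with hq2
      have hXoo : ∀ K : ℕ, (X * oo.comp (Fp γ)).coeff (K + 1)
          = a ^ (m + 1) * c * ((Fp γ) ^ (m + 1)).coeff K := by
        intro K
        rw [Polynomial.coeff_X_mul, hoocomp, Polynomial.coeff_C_mul]
      have hq2deg : q2.natDegree ≤ 2 * m + 2 := by
        rw [Polynomial.natDegree_le_iff_coeff_eq_zero]
        intro N hN
        obtain ⟨K, rfl⟩ : ∃ K, N = K + 1 := ⟨N - 1, by omega⟩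
        rw [hq2, Polynomial.coeff_sub, hXoo]
        rcases eq_or_lt_of_le (show 2 * m + 2 ≤ K by omega) with hK | hK
        · rw [← hK]
          have h1 : p.coeff (2 * m + 2 + 1) = c := by
            rw [hc, show 2 * (m + 1) + 1 = 2 * m + 2 + 1 by ring]
          have h2 : ((Fp γ) ^ (m + 1)).coeff (2 * m + 2) = (a⁻¹) ^ (m + 1) := by
            have := Fp_pow_coeff (γ := γ) hne (m + 1)
            rw [show 2 * (m + 1) = 2 * m + 2 by ring] at this
            exact this
          rw [h1, h2]
          have hone : a ^ (m + 1) * (a⁻¹) ^ (m + 1) = 1 := by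
            rw [← mul_pow, mul_inv_cancel₀ hne, one_pow]
          linear_combination (-c) * hone
        · have h1 : p.coeff (K + 1) = 0 := by
            apply Polynomial.coeff_eq_zero_of_natDegree_lt
            omega
          have h2 : ((Fp γ) ^ (m + 1)).coeff K = 0 := by
            apply Polynomial.coeff_eq_zero_of_natDegree_lt
            rw [Fp_pow_natDegree hne]
            omega
          rw [h1, h2]
          ring
      set d := q2.coeff (2 * m + 2) with hd
      set ee := C (a ^ (m + 1) * d) * X ^ (m + 1) with hee
      have heecomp : ee.comp (Fp γ) = C (a ^ (m + 1) * d) * (Fp γ) ^ (m + 1) := by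
        rw [hee, Polynomial.mul_comp, Polynomial.C_comp, Polynomial.X_pow_comp]
      set q3 := q2 - ee.comp (Fp γ) with hq3
      have hq3deg : q3.natDegree ≤ 2 * m + 1 := by
        rw [Polynomial.natDegree_le_iff_coeff_eq_zero]
        intro N hN
        rw [hq3, Polynomial.coeff_sub, heecomp, Polynomial.coeff_C_mul]
        rcases eq_or_lt_of_le (show 2 * m + 2 ≤ N by omega) with hK | hK
        · rw [← hK]
          have h2 : ((Fp γ) ^ (m + 1)).coeff (2 * m + 2) = (a⁻¹) ^ (m + 1) := by
            have := Fp_pow_coeff (γ := γ) hne (m + 1)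
            rw [show 2 * (m + 1) = 2 * m + 2 by ring] at this
            exact this
          rw [h2, ← hd]
          have hone : a ^ (m + 1) * (a⁻¹) ^ (m + 1) = 1 := by
            rw [← mul_pow, mul_inv_cancel₀ hne, one_pow]
          linear_combination (-d) * hone
        · have h1 : q2.coeff N = 0 := Polynomial.coeff_eq_zero_of_natDegree_lt (by omega)
          have h2 : ((Fp γ) ^ (m + 1)).coeff N = 0 := by
            apply Polynomial.coeff_eq_zero_of_natDegree_lt
            rw [Fp_pow_natDegree hne]
            omega
          rw [h1, h2]
          ring
      obtain ⟨e1, o1, heq1, he1, ho1, _, _⟩ := ih q3 hq3deg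
      refine ⟨ee + e1, oo + o1, ?_, ?_, ?_, ?_, ?_⟩
      · rw [Polynomial.add_comp, Polynomial.add_comp]
        have : p = q3 + ee.comp (Fp γ) + X * oo.comp (Fp γ) := by
          rw [hq3, hq2]; ring
        rw [this, heq1]
        ring
      · refine le_trans (Polynomial.natDegree_add_le _ _) ?_
        rw [max_le_iff]
        constructor
        · refine le_trans (Polynomial.natDegree_C_mul_le _ _) ?_
          simp [Polynomial.natDegree_X_pow]
        · omega
      · refine le_trans (Polynomial.natDegree_add_le _ _) ?_
        rw [max_le_iff]
        constructor
        · refine le_trans (Polynomial.natDegree_C_mul_le _ _) ?_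
          simp [Polynomial.natDegree_X_pow]
        · omega
      · rw [Polynomial.coeff_add]
        have h1 : o1.coeff (m + 1) = 0 :=
          Polynomial.coeff_eq_zero_of_natDegree_lt (by omega)
        rw [h1, add_zero, hoo, Polynomial.coeff_C_mul, Polynomial.coeff_X_pow,
          if_pos rfl, mul_one]
      · intro hcz
        have hc0 : c = 0 := hcz
        have hq2p : q2 = p := by
          rw [hq2, hoocomp, hc0]
          simp
        rw [Polynomial.coeff_add]
        have h1 : e1.coeff (m + 1) = 0 :=
          Polynomial.coeff_eq_zero_of_natDegree_lt (by omega)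
        rw [h1, add_zero, hee, Polynomial.coeff_C_mul, Polynomial.coeff_X_pow,
          if_pos rfl, mul_one, hd, hq2p, show 2 * m + 2 = 2 * (m + 1) by ring]

noncomputable def D (μ : Measure ℝ) (n : ℕ) : ℝ :=
  sInf {v | ∃ p : Polynomial ℝ, p.Monic ∧ p.natDegree = n ∧ v = ∫ x, (p.eval x) ^ 2 ∂μ}

lemma D_set_nonempty (μ : Measure ℝ) (n : ℕ) :
    Set.Nonempty {v | ∃ p : Polynomial ℝ, p.Monic ∧ p.natDegree = n ∧
      v = ∫ x, (p.eval x) ^ 2 ∂μ} :=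
  ⟨_, X ^ n, monic_X_pow n, natDegree_X_pow n, rfl⟩

lemma D_set_bdd (μ : Measure ℝ) (n : ℕ) :
    BddBelow {v | ∃ p : Polynomial ℝ, p.Monic ∧ p.natDegree = n ∧
      v = ∫ x, (p.eval x) ^ 2 ∂μ} := by
  refine ⟨0, ?_⟩
  rintro v ⟨p, _, _, rfl⟩
  exact integral_nonneg fun x => sq_nonneg _

lemma D_le (μ : Measure ℝ) {n : ℕ} {p : Polynomial ℝ} (hm : p.Monic)
    (hd : p.natDegree = n) : D μ n ≤ ∫ x, (p.eval x) ^ 2 ∂μ :=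
  csInf_le (D_set_bdd μ n) ⟨p, hm, hd, rfl⟩

lemma D_ge (μ : Measure ℝ) {n : ℕ} {c : ℝ}
    (h : ∀ p : Polynomial ℝ, p.Monic → p.natDegree = n → c ≤ ∫ x, (p.eval x) ^ 2 ∂μ) :
    c ≤ D μ n := by
  apply le_csInf (D_set_nonempty μ n)
  rintro v ⟨p, hm, hd, rfl⟩
  exact h p hm hd

lemma D_nonneg (μ : Measure ℝ) (n : ℕ) : 0 ≤ D μ n :=
  D_ge μ fun p _ _ => integral_nonneg fun x => sq_nonneg _

/-- integral of a sum of polynomials. -/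
lemma Sys.int_add (S : Sys) (p q : Polynomial ℝ) :
    ∫ x, (p + q).eval x ∂S.μ = (∫ x, p.eval x ∂S.μ) + ∫ x, q.eval x ∂S.μ := by
  simp only [Polynomial.eval_add]
  exact integral_add (S.hint p) (S.hint q)

lemma Sys.int_Cmul (S : Sys) (k : ℝ) (p : Polynomial ℝ) :
    ∫ x, (C k * p).eval x ∂S.μ = k * ∫ x, p.eval x ∂S.μ := by
  simp only [Polynomial.eval_mul, Polynomial.eval_C]
  exact integral_const_mul k _

lemma Sys.int_next (S : Sys) (q : Polynomial ℝ) :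
    ∫ y, q.eval y ∂S.next.μ = ∫ x, (q.comp (Fp S.γ)).eval x ∂S.μ :=
  S.int_map q

lemma Sys.int_X_mul_comp (S : Sys) (g : Polynomial ℝ) :
    ∫ x, (X * g.comp (Fp S.γ)).eval x ∂S.μ = (1/2) * ∫ y, g.eval y ∂S.next.μ := by
  have h1 : (fun x => (X * g.comp (Fp S.γ)).eval x)
      = fun x => ((X - C (1/2 : ℝ)) * g.comp (Fp S.γ)).eval x
          + (C (1/2 : ℝ) * g.comp (Fp S.γ)).eval x := by
    funext x; simp; ring
  rw [h1, integral_add (S.hint _) (S.hint _)]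
  have h2 : ∫ x, ((X - C (1/2 : ℝ)) * g.comp (Fp S.γ)).eval x ∂S.μ = 0 := by
    have h3 : (fun x => ((X - C (1/2 : ℝ)) * g.comp (Fp S.γ)).eval x)
        = fun x => (x - 1/2) * (g.comp (Fp S.γ)).eval x := by
      funext x; simp
    rw [h3]
    exact S.int_sym g
  rw [h2, S.int_Cmul, S.int_next, zero_add]

lemma Sys.int_X_sq_mul_comp (S : Sys) (g : Polynomial ℝ) :
    ∫ x, (X ^ 2 * g.comp (Fp S.γ)).eval x ∂S.μ
      = S.γ 1 * (∫ y, ((X - 1) * g).eval y ∂S.next.μ)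
        + (1/2) * ∫ y, g.eval y ∂S.next.μ := by
  have hne : S.γ 1 ≠ 0 := S.adm.ne0 0
  have h1 : (fun x => (X ^ 2 * g.comp (Fp S.γ)).eval x)
      = fun x => (C (S.γ 1) * (((X - 1) * g).comp (Fp S.γ))).eval x
          + (X * g.comp (Fp S.γ)).eval x := by
    funext x
    simp only [Polynomial.eval_mul, Polynomial.eval_C, Polynomial.eval_pow,
      Polynomial.eval_X, Polynomial.mul_comp, Polynomial.sub_comp,
      Polynomial.X_comp, Polynomial.one_comp, Polynomial.eval_sub,
      Polynomial.eval_one]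
    have hF : (Fp S.γ).eval x = (S.γ 1)⁻¹ * (x ^ 2 - x) + 1 := by
      simp [Fp]
    rw [hF]
    field_simp
    ring
  rw [h1, integral_add (S.hint _) (S.hint _), S.int_Cmul, S.int_next,
    S.int_X_mul_comp, S.int_next]

/-- The central decomposition: for `p = e(F) + x·o(F)`,
`∫ p² dμ = ∫ (e+o/2)² dμ' + ∫ (γ₁(y-1)+1/4)·o² dμ'`. -/
lemma Sys.int_decomp (S : Sys) (e o : Polynomial ℝ) :
    ∫ x, ((e.comp (Fp S.γ)).eval x + x * (o.comp (Fp S.γ)).eval x) ^ 2 ∂S.μ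
      = (∫ y, (((e + C (1/2 : ℝ) * o) ^ 2).eval y) ∂S.next.μ)
        + ∫ y, (((C (S.γ 1) * (X - 1) + C (1/4 : ℝ)) * o ^ 2).eval y) ∂S.next.μ := by
  set J1 := ∫ y, ((e ^ 2).eval y) ∂S.next.μ with hJ1
  set J2 := ∫ y, ((e * o).eval y) ∂S.next.μ with hJ2
  set J3 := ∫ y, (((X - 1) * o ^ 2).eval y) ∂S.next.μ with hJ3
  set J4 := ∫ y, ((o ^ 2).eval y) ∂S.next.μ with hJ4
  have hLHS : ∫ x, ((e.comp (Fp S.γ)).eval x + x * (o.comp (Fp S.γ)).eval x) ^ 2 ∂S.μ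
      = J1 + J2 + (S.γ 1 * J3 + (1/2) * J4) := by
    have h1 : (fun x => ((e.comp (Fp S.γ)).eval x + x * (o.comp (Fp S.γ)).eval x) ^ 2)
        = fun x => ((e ^ 2).comp (Fp S.γ)
            + (C (2:ℝ) * (X * ((e * o).comp (Fp S.γ)))
              + X ^ 2 * ((o ^ 2).comp (Fp S.γ)))).eval x := by
      funext x
      simp only [Polynomial.eval_add, Polynomial.eval_mul, Polynomial.eval_C,
        Polynomial.eval_pow, Polynomial.eval_X, Polynomial.mul_comp,
        Polynomial.pow_comp]
      ring
    rw [h1, S.int_add, S.int_add]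
    rw [← S.int_next (e ^ 2), S.int_Cmul, S.int_X_mul_comp, S.int_X_sq_mul_comp]
    rw [← hJ1, ← hJ2, ← hJ3, ← hJ4]
    ring
  rw [hLHS]
  have hsplit1 : ∫ y, (((e + C (1/2 : ℝ) * o) ^ 2).eval y) ∂S.next.μ
      = J1 + J2 + (1/4) * J4 := by
    have h2 : (C (1/2 : ℝ) : Polynomial ℝ) * 2 = 1 := by
      have h2' : (2 : Polynomial ℝ) = C 2 := by
        rw [show (2:ℝ) = ((2:ℕ):ℝ) by norm_num, Polynomial.C_eq_natCast]; norm_num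
      rw [h2', ← Polynomial.C_mul]
      norm_num
    have hpoly : (e + C (1/2 : ℝ) * o) ^ 2 = e ^ 2 + (e * o + C (1/4 : ℝ) * o ^ 2) := by
      have h3 : (C (1/4 : ℝ) : Polynomial ℝ) = C (1/2 : ℝ) * C (1/2 : ℝ) := by
        rw [← Polynomial.C_mul]; norm_num
      rw [h3]
      linear_combination (e * o) * h2
    rw [hpoly, S.next.int_add, S.next.int_add, S.next.int_Cmul]
    rw [← hJ1, ← hJ2, ← hJ4]
    ring
  have hsplit2 : ∫ y, (((C (S.γ 1) * (X - 1) + C (1/4 : ℝ)) * o ^ 2).eval y) ∂S.next.μ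
      = S.γ 1 * J3 + (1/4) * J4 := by
    have hpoly : (C (S.γ 1) * (X - 1) + C (1/4 : ℝ)) * o ^ 2
        = C (S.γ 1) * ((X - 1) * o ^ 2) + C (1/4 : ℝ) * o ^ 2 := by ring
    rw [hpoly, S.next.int_add, S.next.int_Cmul, S.next.int_Cmul]
  rw [hsplit1, hsplit2]
  ring

lemma Sys.gamma_pos (S : Sys) : 0 < S.γ 1 := S.adm.pos 0
lemma Sys.gamma_le6 (S : Sys) : S.γ 1 ≤ 1/6 := S.adm.le6 0

lemma Sys.B_nonneg (S : Sys) (o : Polynomial ℝ) :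
    0 ≤ ∫ y, (((C (S.γ 1) * (X - 1) + C (1/4 : ℝ)) * o ^ 2).eval y) ∂S.next.μ := by
  apply S.next.int_nonneg
  intro x hx
  obtain ⟨hx0, hx1⟩ := hx
  simp only [Polynomial.eval_mul, Polynomial.eval_add, Polynomial.eval_C,
    Polynomial.eval_sub, Polynomial.eval_X, Polynomial.eval_one, Polynomial.eval_pow]
  have h1 : 0 ≤ S.γ 1 * (x - 1) + 1/4 := by nlinarith [S.gamma_pos, S.gamma_le6]
  exact mul_nonneg h1 (sq_nonneg _)

lemma Sys.int_sq_scale (S' : Sys) {q : Polynomial ℝ} {k : ℝ} (hk : k ≠ 0) {m : ℕ}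
    (hdeg : q.natDegree ≤ m) (hco : q.coeff m = k) :
    k ^ 2 * D S'.μ m ≤ ∫ y, ((q ^ 2).eval y) ∂S'.μ := by
  set et := C k⁻¹ * q with het
  have hqe : q = C k * et := by
    rw [het, ← mul_assoc, ← Polynomial.C_mul, mul_inv_cancel₀ hk, Polynomial.C_1, one_mul]
  have hcoeff : et.coeff m = 1 := by
    rw [het, Polynomial.coeff_C_mul, hco, inv_mul_cancel₀ hk]
  have hdeg' : et.natDegree ≤ m :=
    le_trans (Polynomial.natDegree_C_mul_le _ _) hdeg
  have hmo : et.Monic := Polynomial.monic_of_natDegree_le_of_coeff_eq_one m hdeg' hcoeff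
  have hd : et.natDegree = m :=
    le_antisymm hdeg' (Polynomial.le_natDegree_of_ne_zero (by rw [hcoeff]; exact one_ne_zero))
  have h1 : ∫ y, ((q ^ 2).eval y) ∂S'.μ = k ^ 2 * ∫ y, ((et ^ 2).eval y) ∂S'.μ := by
    have h0 : q ^ 2 = C (k ^ 2) * et ^ 2 := by rw [hqe, mul_pow, ← Polynomial.C_pow]
    rw [h0, S'.int_Cmul]
  have h2 : D S'.μ m ≤ ∫ y, ((et ^ 2).eval y) ∂S'.μ := by
    have h3 := D_le S'.μ hmo hd
    have h4 : ∫ x, (et.eval x) ^ 2 ∂S'.μ = ∫ y, ((et ^ 2).eval y) ∂S'.μ := by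
      congr 1
      funext x
      rw [Polynomial.eval_pow]
    rw [h4] at h3
    exact h3
  rw [h1]
  exact mul_le_mul_of_nonneg_left h2 (sq_nonneg k)

lemma Sys.D_even_ge (S : Sys) (m : ℕ) :
    (S.γ 1) ^ (2 * m) * D S.next.μ m ≤ D S.μ (2 * m) := by
  apply D_ge
  intro p hmo hd
  have hne : S.γ 1 ≠ 0 := S.adm.ne0 0
  obtain ⟨e, o, heq, he, ho, hco, hce⟩ := dec hne m p (by omega)
  have hc1 : p.coeff (2 * m + 1) = 0 :=
    Polynomial.coeff_eq_zero_of_natDegree_lt (by omega)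
  have hoc : o.coeff m = 0 := by rw [hco, hc1, mul_zero]
  have hpc : p.coeff (2 * m) = 1 := by
    have := hmo.coeff_natDegree
    rwa [hd] at this
  have hec : e.coeff m = (S.γ 1) ^ m := by rw [hce hc1, hpc, mul_one]
  have hev : (fun x => (p.eval x) ^ 2)
      = fun x => ((e.comp (Fp S.γ)).eval x + x * (o.comp (Fp S.γ)).eval x) ^ 2 := by
    funext x
    rw [heq]
    simp [Polynomial.eval_add, Polynomial.eval_mul]
  have hint : ∫ x, (p.eval x) ^ 2 ∂S.μ
      = (∫ y, (((e + C (1/2 : ℝ) * o) ^ 2).eval y) ∂S.next.μ)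
        + ∫ y, (((C (S.γ 1) * (X - 1) + C (1/4 : ℝ)) * o ^ 2).eval y) ∂S.next.μ := by
    rw [show (∫ x, (p.eval x) ^ 2 ∂S.μ)
        = ∫ x, ((e.comp (Fp S.γ)).eval x + x * (o.comp (Fp S.γ)).eval x) ^ 2 ∂S.μ from by
      rw [← hev]]
    exact S.int_decomp e o
  rw [hint]
  have hB := S.B_nonneg o
  have hq : (e + C (1/2 : ℝ) * o).coeff m = (S.γ 1) ^ m := by
    rw [Polynomial.coeff_add, hec, Polynomial.coeff_C_mul, hoc, mul_zero, add_zero]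
  have hqd : (e + C (1/2 : ℝ) * o).natDegree ≤ m :=
    le_trans (Polynomial.natDegree_add_le _ _)
      (max_le he (le_trans (Polynomial.natDegree_C_mul_le _ _) ho))
  have hmain := S.next.int_sq_scale (pow_ne_zero m hne) hqd hq
  have hpow : ((S.γ 1) ^ m) ^ 2 = (S.γ 1) ^ (2 * m) := by
    rw [← pow_mul]; ring_nf
  rw [hpow] at hmain
  linarith

lemma Sys.D_even_le (S : Sys) {m : ℕ} (hm : 1 ≤ m) :
    D S.μ (2 * m) ≤ (S.γ 1) ^ (2 * m) * D S.next.μ m := by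
  have hne : S.γ 1 ≠ 0 := S.adm.ne0 0
  have hpos : 0 < (S.γ 1) ^ (2 * m) := pow_pos S.gamma_pos _
  have key : ∀ p' : Polynomial ℝ, p'.Monic → p'.natDegree = m →
      D S.μ (2 * m) ≤ (S.γ 1) ^ (2 * m) * ∫ y, (p'.eval y) ^ 2 ∂S.next.μ := by
    intro p' hmo' hd'
    set q := C ((S.γ 1) ^ m) * (p'.comp (Fp S.γ)) with hq
    have hFpne : (Fp S.γ).natDegree ≠ 0 := by rw [Fp_natDegree hne]; omega
    have hqm : q.Monic := by
      unfold Polynomial.Monic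
      rw [hq, Polynomial.leadingCoeff_mul, Polynomial.leadingCoeff_C,
        Polynomial.leadingCoeff_comp hFpne, Fp_leadingCoeff hne,
        hmo'.leadingCoeff, one_mul, hd', ← mul_pow, mul_inv_cancel₀ hne, one_pow]
    have hqd : q.natDegree = 2 * m := by
      rw [hq, Polynomial.natDegree_C_mul (pow_ne_zero _ hne),
        Polynomial.natDegree_comp, Fp_natDegree hne, hd']
      ring
    have hDle := D_le S.μ hqm hqd
    have hval : ∫ x, (q.eval x) ^ 2 ∂S.μ
        = (S.γ 1) ^ (2 * m) * ∫ y, (p'.eval y) ^ 2 ∂S.next.μ := by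
      have h1 : (fun x => (q.eval x) ^ 2)
          = fun x => (C ((S.γ 1) ^ (2 * m)) * ((p' ^ 2).comp (Fp S.γ))).eval x := by
        funext x
        rw [hq]
        simp only [Polynomial.eval_mul, Polynomial.eval_C, Polynomial.pow_comp,
          Polynomial.eval_pow]
        rw [show (S.γ 1) ^ (2 * m) = ((S.γ 1) ^ m) ^ 2 from by rw [← pow_mul]; ring_nf]
        ring
      rw [show (∫ x, (q.eval x) ^ 2 ∂S.μ)
          = ∫ x, (C ((S.γ 1) ^ (2 * m)) * ((p' ^ 2).comp (Fp S.γ))).eval x ∂S.μ from by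
        rw [← h1]]
      rw [S.int_Cmul, ← S.int_next]
      simp only [Polynomial.eval_pow]
    rw [hval] at hDle
    exact hDle
  have h2 : D S.μ (2 * m) / (S.γ 1) ^ (2 * m) ≤ D S.next.μ m := by
    apply le_csInf (D_set_nonempty _ _)
    rintro v ⟨p', hmo', hd', rfl⟩
    rw [div_le_iff₀ hpos]
    have := key p' hmo' hd'
    linarith
  calc D S.μ (2 * m) = (D S.μ (2 * m) / (S.γ 1) ^ (2 * m)) * (S.γ 1) ^ (2 * m) := by
        field_simp
    _ ≤ D S.next.μ m * (S.γ 1) ^ (2 * m) :=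
        mul_le_mul_of_nonneg_right h2 (le_of_lt hpos)
    _ = (S.γ 1) ^ (2 * m) * D S.next.μ m := by ring

lemma Sys.D_odd_ge (S : Sys) (m : ℕ) :
    (1/4 - S.γ 1) * ((S.γ 1) ^ (2 * m) * D S.next.μ m) ≤ D S.μ (2 * m + 1) := by
  apply D_ge
  intro p hmo hd
  have hne : S.γ 1 ≠ 0 := S.adm.ne0 0
  obtain ⟨e, o, heq, he, ho, hco, _⟩ := dec hne m p (by omega)
  have hpc : p.coeff (2 * m + 1) = 1 := by
    have := hmo.coeff_natDegree
    rwa [hd] at this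
  have hoc : o.coeff m = (S.γ 1) ^ m := by rw [hco, hpc, mul_one]
  have hev : (fun x => (p.eval x) ^ 2)
      = fun x => ((e.comp (Fp S.γ)).eval x + x * (o.comp (Fp S.γ)).eval x) ^ 2 := by
    funext x
    rw [heq]
    simp [Polynomial.eval_add, Polynomial.eval_mul]
  have hint : ∫ x, (p.eval x) ^ 2 ∂S.μ
      = (∫ y, (((e + C (1/2 : ℝ) * o) ^ 2).eval y) ∂S.next.μ)
        + ∫ y, (((C (S.γ 1) * (X - 1) + C (1/4 : ℝ)) * o ^ 2).eval y) ∂S.next.μ := by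
    rw [show (∫ x, (p.eval x) ^ 2 ∂S.μ)
        = ∫ x, ((e.comp (Fp S.γ)).eval x + x * (o.comp (Fp S.γ)).eval x) ^ 2 ∂S.μ from by
      rw [← hev]]
    exact S.int_decomp e o
  rw [hint]
  have hfirst : 0 ≤ ∫ y, (((e + C (1/2 : ℝ) * o) ^ 2).eval y) ∂S.next.μ := by
    apply integral_nonneg
    intro y
    simp only [Pi.zero_apply, Polynomial.eval_pow]
    exact sq_nonneg _
  -- second term lower bound
  have hBsplit : (C (S.γ 1) * (X - 1) + C (1/4 : ℝ)) * o ^ 2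
      = C (1/4 - S.γ 1) * o ^ 2 + C (S.γ 1) * (X * o ^ 2) := by
    rw [Polynomial.C_sub]
    ring
  have hXo : 0 ≤ ∫ y, ((C (S.γ 1) * (X * o ^ 2)).eval y) ∂S.next.μ := by
    apply S.next.int_nonneg
    intro x hx
    obtain ⟨hx0, _⟩ := hx
    simp only [Polynomial.eval_mul, Polynomial.eval_C, Polynomial.eval_X,
      Polynomial.eval_pow]
    have := S.gamma_pos
    positivity
  have hsecond : ∫ y, (((C (S.γ 1) * (X - 1) + C (1/4 : ℝ)) * o ^ 2).eval y) ∂S.next.μ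
      = (1/4 - S.γ 1) * (∫ y, ((o ^ 2).eval y) ∂S.next.μ)
        + ∫ y, ((C (S.γ 1) * (X * o ^ 2)).eval y) ∂S.next.μ := by
    rw [show ((C (S.γ 1) * (X - 1) + C (1/4 : ℝ)) * o ^ 2)
        = C (1/4 - S.γ 1) * o ^ 2 + C (S.γ 1) * (X * o ^ 2) from hBsplit]
    rw [S.next.int_add, S.next.int_Cmul]
  have hosq := S.next.int_sq_scale (pow_ne_zero m hne) ho hoc
  have hpow : ((S.γ 1) ^ m) ^ 2 = (S.γ 1) ^ (2 * m) := by rw [← pow_mul]; ring_nf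
  rw [hpow] at hosq
  have hquarter : (0:ℝ) ≤ 1/4 - S.γ 1 := by
    have := S.gamma_le6; linarith
  have h5 : (1/4 - S.γ 1) * ((S.γ 1) ^ (2 * m) * D S.next.μ m)
      ≤ (1/4 - S.γ 1) * ∫ y, ((o ^ 2).eval y) ∂S.next.μ :=
    mul_le_mul_of_nonneg_left hosq hquarter
  linarith [hsecond, hXo, hfirst, h5]

lemma Sys.int_one (S : Sys) : ∫ x, (1 : Polynomial ℝ).eval x ∂S.μ = 1 := by
  haveI := S.hprob
  simp

lemma Sys.int_X (S : Sys) : ∫ x, x ∂S.μ = 1/2 := by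
  have h := S.int_X_mul_comp 1
  have h1 : (fun x => ((X : Polynomial ℝ) * (1 : Polynomial ℝ).comp (Fp S.γ)).eval x)
      = fun x => x := by
    funext x; simp
  rw [h1] at h
  rw [S.next.int_one] at h
  rw [h]; norm_num

lemma Sys.int_X_sq (S : Sys) : ∫ x, x ^ 2 ∂S.μ = 1/2 - S.γ 1 / 2 := by
  have h := S.int_X_sq_mul_comp 1
  have h1 : (fun x => ((X : Polynomial ℝ) ^ 2 * (1 : Polynomial ℝ).comp (Fp S.γ)).eval x)
      = fun x => x ^ 2 := by
    funext x; simp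
  rw [h1] at h
  rw [S.next.int_one] at h
  have h3 : ∫ y, (((X : Polynomial ℝ) - 1) * 1).eval y ∂S.next.μ = -(1/2) := by
    have e1 : ((X : Polynomial ℝ) - 1) * 1 = X + C (-1) := by
      rw [Polynomial.C_neg, Polynomial.C_1]; ring
    rw [e1, S.next.int_add]
    have e2 : ∫ y, (X : Polynomial ℝ).eval y ∂S.next.μ = 1/2 := by
      simp only [Polynomial.eval_X]
      exact S.next.int_X
    have e3 : ∫ y, (C (-1) : Polynomial ℝ).eval y ∂S.next.μ = -1 := by
      haveI := S.next.hprob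
      simp
    rw [e2, e3]
    norm_num
  rw [h3] at h
  rw [h]; ring

lemma Sys.D_one (S : Sys) : 1/4 - S.γ 1 / 2 ≤ D S.μ 1 := by
  haveI := S.hprob
  apply D_ge
  intro p hmo hd
  have hco1 : p.coeff 1 = 1 := by
    have := hmo.coeff_natDegree; rwa [hd] at this
  have hp : p = X + C (p.coeff 0) := by
    have h0 := Polynomial.eq_X_add_C_of_natDegree_le_one (le_of_eq hd)
    rwa [hco1, Polynomial.C_1, one_mul] at h0
  set c := p.coeff 0 with hc
  have hev : (fun x => (p.eval x) ^ 2)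
      = fun x => ((X : Polynomial ℝ) ^ 2 + (C (2*c) * X + C (c^2))).eval x := by
    funext x
    rw [hp]
    simp only [Polynomial.eval_add, Polynomial.eval_mul, Polynomial.eval_C,
      Polynomial.eval_X, Polynomial.eval_pow]
    ring
  rw [show ∫ x, (p.eval x) ^ 2 ∂S.μ
      = ∫ x, ((X : Polynomial ℝ) ^ 2 + (C (2*c) * X + C (c^2))).eval x ∂S.μ from by
    rw [← hev]]
  rw [S.int_add, S.int_add, S.int_Cmul]
  have e1 : ∫ x, ((X : Polynomial ℝ) ^ 2).eval x ∂S.μ = 1/2 - S.γ 1 / 2 := by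
    simp only [Polynomial.eval_pow, Polynomial.eval_X]
    exact S.int_X_sq
  have e2 : ∫ x, (X : Polynomial ℝ).eval x ∂S.μ = 1/2 := by
    simp only [Polynomial.eval_X]
    exact S.int_X
  have e3 : ∫ x, (C (c^2) : Polynomial ℝ).eval x ∂S.μ = c^2 := by
    simp
  rw [e1, e2, e3]
  nlinarith [sq_nonneg (c + 1/2)]

/-- the capacity constant. -/
noncomputable def Cap (γ : ℕ → ℝ) : ℝ :=
  Real.exp (∑' k : ℕ, (1 / 2 : ℝ) ^ (k + 1) * Real.log (γ (k + 1)))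

lemma cap_pos (γ : ℕ → ℝ) : 0 < Cap γ := Real.exp_pos _

lemma Sys.cap_summable (S : Sys) :
    Summable fun k : ℕ => (1/2 : ℝ) ^ (k + 1) * Real.log (S.γ (k + 1)) := by
  have h2 := S.hsum.neg
  apply h2.congr
  intro k
  rw [show (1:ℝ)/S.γ (k+1) = (S.γ (k+1))⁻¹ from one_div _, Real.log_inv]
  ring

lemma Sys.cap_sq (S : Sys) : (Cap S.γ) ^ 2 = S.γ 1 * Cap (shift S.γ) := by
  have hs := S.cap_summable
  set f := fun k : ℕ => (1/2 : ℝ) ^ (k + 1) * Real.log (S.γ (k + 1)) with hf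
  set g := fun k : ℕ => (1/2 : ℝ) ^ k * Real.log (S.γ (k + 1)) with hg
  have hgsum : Summable g := by
    have := hs.mul_left 2
    apply this.congr
    intro k
    rw [hg, hf]
    simp only []
    rw [pow_succ]
    ring
  have key : 2 * (∑' k, f k) = Real.log (S.γ 1) + ∑' k : ℕ,
      (1/2 : ℝ) ^ (k + 1) * Real.log (S.γ (k + 2)) := by
    have h1 : 2 * (∑' k, f k) = ∑' k, g k := by
      rw [← tsum_mul_left]
      congr 1
      funext k
      rw [hg, hf]
      simp only []
      rw [pow_succ]
      ring
    rw [h1, hgsum.tsum_eq_zero_add]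
    congr 1
    · rw [hg]; simp
  unfold Cap
  rw [← Real.exp_log S.gamma_pos, ← Real.exp_add]
  rw [show (Real.exp (∑' k : ℕ, (1/2:ℝ)^(k+1) * Real.log (S.γ (k+1)))) ^ 2
      = Real.exp (2 * ∑' k : ℕ, (1/2:ℝ)^(k+1) * Real.log (S.γ (k+1))) from by
    rw [two_mul, Real.exp_add]; ring]
  rw [key]
  congr 2

lemma geom_half : Summable (fun k : ℕ => (1/2:ℝ)^(k+1)) ∧
    ∑' k : ℕ, (1/2:ℝ)^(k+1) = 1 := by
  have hs : Summable (fun k : ℕ => (1/2:ℝ)^k) :=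
    summable_geometric_of_lt_one (by norm_num) (by norm_num)
  have h1 : (fun k : ℕ => (1/2:ℝ)^(k+1)) = fun k => (1/2) * (1/2)^k := by
    funext k; rw [pow_succ]; ring
  constructor
  · rw [h1]; exact hs.mul_left _
  · rw [h1, tsum_mul_left, tsum_geometric_of_lt_one (by norm_num) (by norm_num)]
    norm_num

lemma Sys.cap_le (S : Sys) : Cap S.γ ≤ 1/6 := by
  have hs := S.cap_summable
  have hgeo := geom_half
  have hgeom : Summable fun k : ℕ => (1/2 : ℝ)^(k+1) * Real.log (1/6) :=
    hgeo.1.mul_right _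
  have h1 : (∑' k : ℕ, (1/2:ℝ)^(k+1) * Real.log (S.γ (k+1)))
      ≤ ∑' k : ℕ, (1/2:ℝ)^(k+1) * Real.log (1/6) := by
    apply Summable.tsum_le_tsum _ hs hgeom
    intro k
    apply mul_le_mul_of_nonneg_left _ (by positivity)
    exact Real.log_le_log (S.adm.pos k) (S.adm.le6 k)
  have h2 : ∑' k : ℕ, (1/2:ℝ)^(k+1) * Real.log (1/6) = Real.log (1/6) := by
    rw [tsum_mul_right, hgeo.2, one_mul]
  unfold Cap
  calc Real.exp (∑' k : ℕ, (1/2:ℝ)^(k+1) * Real.log (S.γ (k+1)))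
      ≤ Real.exp (Real.log (1/6)) := Real.exp_le_exp.mpr (h1.trans (le_of_eq h2))
    _ = 1/6 := Real.exp_log (by norm_num)

noncomputable def V (S : Sys) (n : ℕ) : ℝ := D S.μ n / (Cap S.γ) ^ (2 * n)

lemma V_nonneg (S : Sys) (n : ℕ) : 0 ≤ V S n :=
  div_nonneg (D_nonneg _ _) (le_of_lt (pow_pos (cap_pos _) _))

lemma Sys.next_γ (S : Sys) : S.next.γ = shift S.γ := rfl

lemma Sys.V_even (S : Sys) {m : ℕ} (hm : 1 ≤ m) : V S (2 * m) = V S.next m := by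
  unfold V
  have hD : D S.μ (2 * m) = (S.γ 1) ^ (2 * m) * D S.next.μ m :=
    le_antisymm (S.D_even_le hm) (S.D_even_ge m)
  have hc : (Cap S.γ) ^ (2 * (2 * m))
      = (S.γ 1) ^ (2 * m) * (Cap (shift S.γ)) ^ (2 * m) := by
    rw [pow_mul, S.cap_sq, mul_pow]
  rw [hD, hc, S.next_γ]
  rw [mul_div_mul_left _ _ (pow_ne_zero _ (ne_of_gt S.gamma_pos))]

lemma Sys.V_odd (S : Sys) (m : ℕ) : 2 * V S.next m ≤ V S (2 * m + 1) := by
  unfold V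
  have hD := S.D_odd_ge m
  have hgp := S.gamma_pos
  have hg6 := S.gamma_le6
  have hcp : 0 < Cap (shift S.γ) := cap_pos _
  have hc6 : Cap (shift S.γ) ≤ 1/6 := S.next.cap_le
  set A := D S.next.μ m with hA
  have hA0 : 0 ≤ A := D_nonneg _ _
  set cc := Cap (shift S.γ) with hcc
  have hc : (Cap S.γ) ^ (2 * (2 * m + 1))
      = ((S.γ 1) ^ (2*m) * cc ^ (2*m)) * (S.γ 1 * cc) := by
    rw [pow_mul, S.cap_sq, pow_succ, mul_pow]
  rw [hc, S.next_γ]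
  have hden : 0 < ((S.γ 1) ^ (2*m) * cc ^ (2*m)) * (S.γ 1 * cc) := by positivity
  rw [le_div_iff₀ hden]
  calc 2 * (A / cc^(2*m)) * (((S.γ 1)^(2*m) * cc^(2*m)) * (S.γ 1 * cc))
      = (2 * (S.γ 1 * cc)) * ((S.γ 1)^(2*m) * A) * (cc^(2*m) / cc^(2*m)) := by
        ring
    _ = (2 * (S.γ 1 * cc)) * ((S.γ 1)^(2*m) * A) := by
        rw [div_self (pow_ne_zero _ (ne_of_gt hcp)), mul_one]
    _ ≤ (1/4 - S.γ 1) * ((S.γ 1)^(2*m) * A) := by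
        apply mul_le_mul_of_nonneg_right _ (by positivity)
        nlinarith
    _ ≤ D S.μ (2*m+1) := hD

lemma Sys.V_one (S : Sys) : 1 ≤ V S 1 := by
  unfold V
  have hD := S.D_one
  have hg6 := S.gamma_le6
  have hcap := S.cap_le
  have hcp := cap_pos S.γ
  rw [le_div_iff₀ (by positivity)]
  have h36 : (Cap S.γ)^(2*1) ≤ (1/36 : ℝ) := by
    rw [show 2*1 = 2 from rfl]
    calc (Cap S.γ)^2 ≤ (1/6 : ℝ)^2 := pow_le_pow_left₀ (le_of_lt hcp) hcap 2
      _ = 1/36 := by norm_num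
  have hD6 : (1/6 : ℝ) ≤ D S.μ 1 := by linarith
  calc 1 * (Cap S.γ)^(2*1) = (Cap S.γ)^(2*1) := one_mul _
    _ ≤ 1/36 := h36
    _ ≤ 1/6 := by norm_num
    _ ≤ D S.μ 1 := hD6

lemma claim1 : ∀ s : ℕ, ∀ S : Sys, ∀ n : ℕ, 2^s ≤ n → n < 2^(s+1) → V S (2^s) ≤ V S n := by
  intro s
  induction s with
  | zero =>
      intro S n h1 h2
      have : n = 1 := by norm_num at h1 h2; omega
      rw [this]
      norm_num
  | succ s ih =>
      intro S n h1 h2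
      have e1 : (2:ℕ)^(s+1) = 2*2^s := by rw [pow_succ]; ring
      have e2 : (2:ℕ)^(s+2) = 4*2^s := by rw [pow_succ, pow_succ]; ring
      have hps : 1 ≤ (2:ℕ)^s := Nat.one_le_two_pow
      have he : V S (2^(s+1)) = V S.next (2^s) := by
        have := S.V_even (m := 2^s) hps
        rwa [show 2 * 2^s = 2^(s+1) from by rw [pow_succ]; ring] at this
      rcases Nat.even_or_odd n with ⟨m, hn⟩ | ⟨m, hn⟩
      · have hn' : n = 2 * m := by omega
        have h1m : 1 ≤ m := by omega
        have hml : 2^s ≤ m := by omega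
        have hmu : m < 2^(s+1) := by omega
        rw [hn', S.V_even h1m, he]
        exact ih S.next m hml hmu
      · have hn' : n = 2 * m + 1 := by omega
        have hml : 2^s ≤ m := by omega
        have hmu : m < 2^(s+1) := by omega
        calc V S (2^(s+1)) = V S.next (2^s) := he
          _ ≤ V S.next m := ih S.next m hml hmu
          _ ≤ 2 * V S.next m := by nlinarith [V_nonneg S.next m]
          _ ≤ V S (2*m+1) := S.V_odd m
          _ = V S n := by rw [hn']

lemma claim2 : ∀ s : ℕ, ∀ S : Sys, (2:ℝ)^s ≤ V S (2^(s+1) - 1) := by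
  intro s
  induction s with
  | zero =>
      intro S
      simpa using S.V_one
  | succ s ih =>
      intro S
      have hle : 2 ≤ (2:ℕ)^(s+1) := by
        calc 2 = 2^1 := by norm_num
          _ ≤ 2^(s+1) := Nat.pow_le_pow_right (by norm_num) (by omega)
      have hn : (2:ℕ)^(s+1+1) - 1 = 2 * (2^(s+1) - 1) + 1 := by
        have e1 : (2:ℕ)^(s+2) = 2*2^(s+1) := by rw [pow_succ]; ring
        omega
      rw [hn]
      calc (2:ℝ)^(s+1) = 2 * 2^s := by ring
        _ ≤ 2 * V S.next (2^(s+1) - 1) := by nlinarith [ih S.next]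
        _ ≤ V S (2 * (2^(s+1) - 1) + 1) := S.V_odd _

end W19

theorem stmt_19 (γ : ℕ → ℝ) (hγ : ∀ s : ℕ, 0 < γ (s + 1) ∧ γ (s + 1) < 1 / 4)
    (hcap : Summable fun k : ℕ => (1 / 2 : ℝ) ^ (k + 1) * Real.log (1 / γ (k + 1)))
    (hγ6 : ∀ s : ℕ, γ (s + 1) ≤ 1 / 6)
    (μ : Measure ℝ) [IsProbabilityMeasure μ]
    (hμint : ∀ p : Polynomial ℝ, Integrable (fun x => p.eval x) μ)
    (hμpos : ∀ p : Polynomial ℝ, p ≠ 0 → 0 < ∫ x, (p.eval x) ^ 2 ∂μ)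
    (hμconv : ∀ p : Polynomial ℝ,
      Tendsto (fun s => nuInt γ s (fun x => p.eval x)) atTop (nhds (∫ x, p.eval x ∂μ)))
    (Q : ℕ → Polynomial ℝ) (hQmonic : ∀ n, (Q n).Monic) (hQdeg : ∀ n, (Q n).natDegree = n)
    (hQorth : ∀ n : ℕ, ∀ p : Polynomial ℝ, p.degree < (n : WithBot ℕ) →
      ∫ x, (Q n).eval x * p.eval x ∂μ = 0)
    :
    (∀ s n : ℕ, 2 ^ s ≤ n → n < 2 ^ (s + 1) → widomW γ μ Q (2 ^ s) ≤ widomW γ μ Q n) ∧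
    Filter.liminf (fun s => (widomW γ μ Q (2 ^ s) : EReal)) Filter.atTop =
      Filter.liminf (fun n => (widomW γ μ Q n : EReal)) Filter.atTop ∧
    Filter.limsup (fun n => (widomW γ μ Q n : EReal)) Filter.atTop = ⊤ := by
  classical
  have adm : W19.Adm γ := fun s => ⟨(hγ s).1, hγ6 s⟩
  let S₀ : W19.Sys := ⟨γ, μ, adm, hcap, inferInstance, hμint, hμconv⟩
  -- the L² norm of Q n equals the minimal norm D μ n
  have hQD : ∀ n, ∫ x, ((Q n).eval x) ^ 2 ∂μ = W19.D μ n := by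
    intro n
    refine le_antisymm ?_ (W19.D_le μ (hQmonic n) (hQdeg n))
    apply W19.D_ge
    intro p hpm hpd
    rcases eq_or_ne p (Q n) with rfl | hne0
    · exact le_refl _
    set l := p - Q n with hl
    have hl0 : l ≠ 0 := sub_ne_zero.mpr hne0
    have hpz : p ≠ 0 := hpm.ne_zero
    have hdeg : p.degree = (Q n).degree := by
      rw [Polynomial.degree_eq_natDegree hpz,
        Polynomial.degree_eq_natDegree (hQmonic n).ne_zero, hpd, hQdeg n]
    have hld : l.degree < (n : WithBot ℕ) := by
      have h2 := Polynomial.degree_sub_lt hdeg hpz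
        (by rw [hpm.leadingCoeff, (hQmonic n).leadingCoeff])
      rwa [Polynomial.degree_eq_natDegree hpz, hpd] at h2
    have horth := hQorth n l hld
    have hev : (fun x => (p.eval x) ^ 2)
        = fun x => ((Q n) ^ 2).eval x
            + ((Polynomial.C (2:ℝ) * (Q n * l)).eval x + (l ^ 2).eval x) := by
      funext x
      have hplq : p = Q n + l := by rw [hl]; ring
      rw [hplq]
      simp only [Polynomial.eval_add, Polynomial.eval_mul, Polynomial.eval_C,
        Polynomial.eval_pow]
      ring
    rw [show (∫ x, (p.eval x) ^ 2 ∂μ)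
        = ∫ x, (((Q n) ^ 2).eval x
            + ((Polynomial.C (2:ℝ) * (Q n * l)).eval x + (l ^ 2).eval x)) ∂μ from by
      rw [← hev]]
    rw [integral_add (hμint _)
      (show Integrable (fun x => (Polynomial.C (2:ℝ) * (Q n * l)).eval x
          + (l ^ 2).eval x) μ from (hμint _).add (hμint _))]
    rw [integral_add (hμint _) (hμint _)]
    have e1 : ∫ x, ((Q n) ^ 2).eval x ∂μ = ∫ x, ((Q n).eval x) ^ 2 ∂μ := by
      simp only [Polynomial.eval_pow]
    have e2 : ∫ x, (Polynomial.C (2:ℝ) * (Q n * l)).eval x ∂μ = 0 := by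
      simp only [Polynomial.eval_mul, Polynomial.eval_C]
      rw [integral_const_mul]
      have : ∫ x, (Q n).eval x * l.eval x ∂μ = 0 := horth
      rw [show (fun x => (Q n).eval x * l.eval x) = fun x => (Q n).eval x * l.eval x
        from rfl] at this
      rw [this, mul_zero]
    have e3 : 0 ≤ ∫ x, (l ^ 2).eval x ∂μ := by
      apply integral_nonneg
      intro x
      simp only [Pi.zero_apply, Polynomial.eval_pow]
      exact sq_nonneg _
    rw [e1, e2]
    linarith
  -- widomW in terms of V
  have hVeq : ∀ n, W19.V S₀ n = W19.D μ n / (W19.Cap γ) ^ (2 * n) := fun n => rfl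
  have hW : ∀ n, widomW γ μ Q n = Real.sqrt (W19.V S₀ n) := by
    intro n
    have h1 : Real.sqrt (W19.V S₀ n) = Real.sqrt (W19.D μ n) / (W19.Cap γ) ^ n := by
      rw [hVeq n, Real.sqrt_div (W19.D_nonneg μ n), show 2 * n = n * 2 from by ring,
        pow_mul, Real.sqrt_sq (pow_nonneg (le_of_lt (W19.cap_pos γ)) n)]
    rw [h1]
    unfold widomW
    rw [hQD n]
    rfl
  have hpart1 : ∀ s n : ℕ, 2 ^ s ≤ n → n < 2 ^ (s + 1) →
      widomW γ μ Q (2 ^ s) ≤ widomW γ μ Q n := by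
    intro s n h1 h2
    rw [hW, hW]
    exact Real.sqrt_le_sqrt (W19.claim1 s S₀ n h1 h2)
  refine ⟨hpart1, ?_, ?_⟩
  · -- liminf equality
    apply le_antisymm
    · have hlog : Tendsto (Nat.log 2) atTop atTop := by
        rw [tendsto_atTop_atTop]
        intro b
        refine ⟨2 ^ b, fun n hn => ?_⟩
        have hn0 : n ≠ 0 := by
          have : 1 ≤ 2 ^ b := Nat.one_le_two_pow
          omega
        exact (Nat.le_log_iff_pow_le one_lt_two hn0).mpr hn
      have step1 : liminf (fun s => (widomW γ μ Q (2 ^ s) : EReal)) atTop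
          ≤ liminf (fun n => (widomW γ μ Q (2 ^ (Nat.log 2 n)) : EReal)) atTop := by
        have hcmp : liminf (fun n => (widomW γ μ Q (2 ^ (Nat.log 2 n)) : EReal)) atTop
            = liminf (fun s => (widomW γ μ Q (2 ^ s) : EReal)) (map (Nat.log 2) atTop) := by
          rw [Filter.liminf, Filter.liminf, Filter.map_map]
          rfl
        rw [hcmp]
        exact liminf_le_liminf_of_le hlog
      have step2 : liminf (fun n => (widomW γ μ Q (2 ^ (Nat.log 2 n)) : EReal)) atTop
          ≤ liminf (fun n => (widomW γ μ Q n : EReal)) atTop := by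
        have hev : ∀ᶠ n in atTop, (widomW γ μ Q (2 ^ (Nat.log 2 n)) : EReal)
            ≤ (widomW γ μ Q n : EReal) := by
          filter_upwards [eventually_ge_atTop 1] with n hn
          have h1 : 2 ^ (Nat.log 2 n) ≤ n := Nat.pow_log_le_self 2 (by omega)
          have h2 : n < 2 ^ (Nat.log 2 n + 1) := Nat.lt_pow_succ_log_self (by norm_num) n
          exact EReal.coe_le_coe_iff.mpr (hpart1 (Nat.log 2 n) n h1 h2)
        exact Filter.liminf_le_liminf hev
      exact step1.trans step2
    · have hpow : Tendsto (fun s : ℕ => 2 ^ s) atTop atTop :=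
        tendsto_atTop_mono (fun s => le_of_lt (Nat.lt_two_pow_self (n := s))) tendsto_id
      have hcmp : liminf (fun s => (widomW γ μ Q (2 ^ s) : EReal)) atTop
          = liminf (fun n => (widomW γ μ Q n : EReal)) (map (fun s : ℕ => 2 ^ s) atTop) := by
        rw [Filter.liminf, Filter.liminf, Filter.map_map]
        rfl
      rw [hcmp]
      exact liminf_le_liminf_of_le hpow
  · -- limsup = ⊤
    rw [Filter.limsup_eq]
    apply sInf_eq_top.mpr
    intro a ha
    simp only [Set.mem_setOf_eq] at ha
    rw [EReal.eq_top_iff_forall_lt]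
    intro y
    rw [eventually_atTop] at ha
    obtain ⟨N, hN⟩ := ha
    obtain ⟨s₁, hs₁⟩ := pow_unbounded_of_one_lt (max y 0 ^ 2) (by norm_num : (1:ℝ) < 2)
    set s := max s₁ N with hs
    have hsge : (max y 0) ^ 2 < (2:ℝ) ^ s :=
      lt_of_lt_of_le hs₁ (pow_le_pow_right₀ (by norm_num) (le_max_left _ _))
    have hNle : N ≤ 2 ^ (s + 1) - 1 := by
      have h1 : N ≤ s := le_max_right _ _
      have h2 : s < 2 ^ s := Nat.lt_two_pow_self
      have h3 : (2:ℕ) ^ (s + 1) = 2 * 2 ^ s := by rw [pow_succ]; ring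
      omega
    have hua := hN _ hNle
    have hWn : Real.sqrt ((2:ℝ) ^ s) ≤ widomW γ μ Q (2 ^ (s + 1) - 1) := by
      rw [hW]
      exact Real.sqrt_le_sqrt (W19.claim2 s S₀)
    have hy : y < widomW γ μ Q (2 ^ (s + 1) - 1) := by
      have h4 : max y 0 < Real.sqrt ((2:ℝ) ^ s) := (Real.lt_sqrt (le_max_right y 0)).mpr hsge
      have h5 := le_max_left y 0
      linarith
    calc (y : EReal) < (widomW γ μ Q (2 ^ (s + 1) - 1) : EReal) :=
          EReal.coe_lt_coe_iff.mpr hy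
      _ ≤ a := hua
end
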